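/- arXiv:1304.1451 — 3 statements merged into one kernel-verified Lean document; each statement's English description precedes it below -/
import Mathlib

section
/- Let 1<p<∞ and let μ be a positive finite Borel measure on the closed unit disk. If there exists C>0 such that ∫_{closed 𝔻} |f|^p dμ ≥ C·‖f‖_p^p for every function f that is continuous on the closed unit disk and holomorphic on the open unit disk, then there exists C'>0 such that ∫_{∂𝔻} |f|^p d(μ|_{∂𝔻}) ≥ C'·‖f‖_p^p for every such f; that is, the restriction of μ to the unit circle is already a reverse Carleson measure and the part of μ supported in the open disk can be dropped. -/
open MeasureTheory Complex Set Metric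

noncomputable section

/-- The `p`-th power mean of `f` on the circle of radius `r` (normalized by `2π`). -/
def hIntegral (p : ℝ) (f : ℂ → ℂ) (r : ℝ) : ℝ :=
  (1 / (2 * Real.pi)) *
    ∫ θ in (0:ℝ)..(2 * Real.pi), ‖f ((r : ℂ) * Complex.exp (θ * Complex.I))‖ ^ p

/-- `‖f‖_p ^ p`, the `p`-th power of the Hardy space `H^p` norm. -/
def hNormPow (p : ℝ) (f : ℂ → ℂ) : ℝ := sSup (hIntegral p f '' Ioo (0:ℝ) 1)

/-- The Hardy space `H^p` norm. -/
def hNorm (p : ℝ) (f : ℂ → ℂ) : ℝ := hNormPow p f ^ (1 / p)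

/-- `f` has finite `H^p` norm. -/
def HpFinite (p : ℝ) (f : ℂ → ℂ) : Prop := BddAbove (hIntegral p f '' Ioo (0:ℝ) 1)

/-- The `H^p` reproducing kernel `k_λ(z) = 1/(1 - conj(λ) z)`. -/
def hker (l : ℂ) : ℂ → ℂ := fun z => 1 / (1 - (starRingEnd ℂ) l * z)

/-- The normalized reproducing kernel `K_λ = k_λ / ‖k_λ‖_p`. -/
def hkerN (p : ℝ) (l : ℂ) : ℂ → ℂ := fun z => hker l z / (hNorm p (hker l) : ℂ)

/-- The arc of the unit circle starting at angle `a` of normalized length `ℓ`. -/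
def cArc (a ℓ : ℝ) : Set ℂ :=
  (fun θ : ℝ => Complex.exp (θ * Complex.I)) '' Ico a (a + 2 * Real.pi * ℓ)

/-- The modified Carleson window `S_{I,h}` over the arc of normalized length `ℓ`
starting at angle `a`, with radial depth `h`. -/
def cWindowH (a ℓ h : ℝ) : Set ℂ :=
  {z : ℂ | 1 - h ≤ ‖z‖ ∧ ‖z‖ ≤ 1 ∧ z / (‖z‖ : ℂ) ∈ cArc a ℓ}

/-- The Carleson window `S_I`. -/
def cWindow (a ℓ : ℝ) : Set ℂ := cWindowH a ℓ ℓ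

/-- Normalized Lebesgue (arclength over `2π`) measure on the unit circle `∂𝔻`. -/
def circM : Measure ℂ :=
  (ENNReal.ofReal (1 / (2 * Real.pi))) •
    Measure.map (fun θ : ℝ => Complex.exp (θ * Complex.I))
      (volume.restrict (Ico (0:ℝ) (2 * Real.pi)))

end

open intervalIntegral Filter Topology
open scoped ENNReal NNReal

noncomputable def Pker (z : ℂ) (t : ℝ) : ℝ :=
  (1 - ‖z‖ ^ 2) / ‖Complex.exp (t * Complex.I) - z‖ ^ 2

lemma Pker_nonneg {z : ℂ} (hz : ‖z‖ ≤ 1) (t : ℝ) : 0 ≤ Pker z t := by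
  apply div_nonneg
  · nlinarith [norm_nonneg z]
  · positivity

lemma kernel_eq {w z : ℂ} (hw : ‖w‖ = 1) (hz : ‖z‖ < 1) :
    w * ((w - z)⁻¹ * ((1 - (starRingEnd ℂ) z * z) / (1 - (starRingEnd ℂ) z * w)))
      = (((1 - ‖z‖ ^ 2) / ‖w - z‖ ^ 2 : ℝ) : ℂ) := by
  have hwz : w - z ≠ 0 := sub_ne_zero.2 (fun h => by rw [h] at hw; exact absurd hw (ne_of_lt hz))
  have hzw : (1 : ℂ) - (starRingEnd ℂ) z * w ≠ 0 := by
    intro h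
    have : ‖(starRingEnd ℂ) z * w‖ = 1 := by
      have : (starRingEnd ℂ) z * w = 1 := by linear_combination -h
      rw [this]; simp
    rw [norm_mul, Complex.norm_conj, hw, mul_one] at this
    exact absurd this (ne_of_lt hz)
  have h1 : (starRingEnd ℂ) w * w = 1 := by
    rw [mul_comm, Complex.mul_conj]
    norm_cast
    rw [← Complex.sq_norm, hw]; norm_num
  have h2 : ((‖z‖ ^ 2 : ℝ) : ℂ) = (starRingEnd ℂ) z * z := by
    rw [mul_comm, Complex.mul_conj]
    norm_cast
    rw [← Complex.sq_norm]
  have h3 : ((‖w - z‖ ^ 2 : ℝ) : ℂ) = (w - z) * ((starRingEnd ℂ) w - (starRingEnd ℂ) z) := by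
    rw [Complex.sq_norm, ← Complex.mul_conj]
    simp [map_sub]
  have hcwz : (starRingEnd ℂ) w - (starRingEnd ℂ) z ≠ 0 := by
    intro h
    exact hwz (sub_eq_zero.2 (by simpa using congrArg (starRingEnd ℂ) (sub_eq_zero.1 h)))
  have hw0 : w ≠ 0 := by
    intro h; rw [h] at hw; simp at hw
  have hd : (starRingEnd ℂ) w = w⁻¹ := eq_inv_of_mul_eq_one_left h1
  have h6 : w⁻¹ - (starRingEnd ℂ) z ≠ 0 := by rw [← hd]; exact hcwz
  rw [Complex.ofReal_div, Complex.ofReal_sub, Complex.ofReal_one, h2, h3, hd]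
  rw [eq_div_iff (mul_ne_zero hwz h6)]
  field_simp
  rw [mul_comm w, mul_div_assoc, div_self hzw, mul_one]

lemma poisson_rep {f : ℂ → ℂ} (hc : ContinuousOn f (closedBall 0 1))
    (hd : DifferentiableOn ℂ f (ball 0 1)) {z : ℂ} (hz : z ∈ ball (0:ℂ) 1) :
    (∫ t in (0:ℝ)..(2*Real.pi), ((Pker z t : ℝ) : ℂ) * f (Complex.exp (t * Complex.I)))
      = (2*Real.pi) * f z := by
  have hz' : ‖z‖ < 1 := by simpa [mem_ball, Complex.dist_eq] using hz
  set g : ℂ → ℂ := fun w => f w * ((1 - (starRingEnd ℂ) z * z) / (1 - (starRingEnd ℂ) z * w))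
    with hg
  have hden : ∀ w : ℂ, ‖w‖ ≤ 1 → (1 : ℂ) - (starRingEnd ℂ) z * w ≠ 0 := by
    intro w hw h
    have h1 : (starRingEnd ℂ) z * w = 1 := by linear_combination -h
    have := congrArg norm h1
    rw [norm_mul, Complex.norm_conj, norm_one] at this
    nlinarith [norm_nonneg w, norm_nonneg z]
  have hgd : DiffContOnCl ℂ g (ball (0:ℂ) 1) := by
    constructor
    · apply hd.mul
      apply DifferentiableOn.div (differentiableOn_const _)
      · exact (differentiableOn_const _).sub ((differentiableOn_const _).mul differentiableOn_id)
      · intro w hw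
        exact hden w (le_of_lt (by simpa [mem_ball, Complex.dist_eq] using hw))
    · rw [closure_ball (0:ℂ) one_ne_zero]
      apply hc.mul
      apply ContinuousOn.div continuousOn_const
      · exact (continuousOn_const.sub (continuousOn_const.mul continuousOn_id))
      · intro w hw
        exact hden w (by simpa [mem_closedBall, Complex.dist_eq] using hw)
  have key := hgd.circleIntegral_sub_inv_smul hz
  have hgz : g z = f z := by
    rw [hg]
    simp only
    rw [div_self (hden z (le_of_lt hz')), mul_one]
  rw [hgz] at key
  rw [circleIntegral] at key
  simp only [deriv_circleMap, circleMap_zero, circleMap, zero_add, one_mul, Complex.ofReal_one,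
    smul_eq_mul] at key
  have keyeq : ∀ t : ℝ,
      Complex.exp (t * Complex.I) * Complex.I * ((Complex.exp (t * Complex.I) - z)⁻¹ * g (Complex.exp (t * Complex.I)))
        = Complex.I * (((Pker z t : ℝ) : ℂ) * f (Complex.exp (t * Complex.I))) := by
    intro t
    have hk := kernel_eq (w := Complex.exp (t * Complex.I)) (z := z)
      (Complex.norm_exp_ofReal_mul_I t) hz'
    rw [hg]
    simp only
    rw [Pker]
    calc Complex.exp (t * Complex.I) * Complex.I *
          ((Complex.exp (t * Complex.I) - z)⁻¹ *
            (f (Complex.exp (t * Complex.I)) *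
              ((1 - (starRingEnd ℂ) z * z) / (1 - (starRingEnd ℂ) z * Complex.exp (t * Complex.I)))))
        = Complex.I * ((Complex.exp (t * Complex.I) *
            ((Complex.exp (t * Complex.I) - z)⁻¹ *
              ((1 - (starRingEnd ℂ) z * z) / (1 - (starRingEnd ℂ) z * Complex.exp (t * Complex.I))))) *
            f (Complex.exp (t * Complex.I))) := by ring
      _ = _ := by rw [hk]
  rw [intervalIntegral.integral_congr (g := fun t => Complex.I * (((Pker z t : ℝ) : ℂ) * f (Complex.exp (t * Complex.I)))) (fun t _ => keyeq t)] at key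
  rw [intervalIntegral.integral_const_mul] at key
  apply mul_left_cancel₀ Complex.I_ne_zero
  rw [key]
  ring

lemma Pker_pos {z : ℂ} (hz : ‖z‖ < 1) (t : ℝ) : 0 < Pker z t := by
  apply div_pos
  · nlinarith [norm_nonneg z]
  · have : Complex.exp (t * Complex.I) - z ≠ 0 := by
      intro h
      have := sub_eq_zero.1 h
      rw [← this] at hz
      rw [Complex.norm_exp_ofReal_mul_I] at hz
      linarith
    exact pow_pos (norm_pos_iff.mpr this) 2

lemma Pker_cont {z : ℂ} (hz : ‖z‖ < 1) : Continuous (Pker z) := by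
  apply Continuous.div continuous_const
  · exact (continuous_norm.comp (by fun_prop)).pow 2
  · intro t
    have : Complex.exp (t * Complex.I) - z ≠ 0 := by
      intro h
      have := sub_eq_zero.1 h
      rw [← this, Complex.norm_exp_ofReal_mul_I] at hz
      linarith
    exact pow_ne_zero 2 (norm_ne_zero_iff.mpr this)

lemma circle_cont {f : ℂ → ℂ} (hc : ContinuousOn f (closedBall 0 1)) :
    Continuous (fun t : ℝ => f (Complex.exp (t * Complex.I))) := by
  apply hc.comp_continuous (by fun_prop)
  intro t
  simp [mem_closedBall, Complex.dist_eq, Complex.norm_exp_ofReal_mul_I]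

lemma Pker_integral {z : ℂ} (hz : z ∈ ball (0:ℂ) 1) :
    ∫ t in (0:ℝ)..(2*Real.pi), Pker z t = 2*Real.pi := by
  have h := poisson_rep (f := fun _ => 1) continuousOn_const (differentiableOn_const _) hz
  simp only [mul_one] at h
  rw [intervalIntegral.integral_ofReal] at h
  exact_mod_cast h

lemma pointwise_jensen {p : ℝ} (hp : 1 < p) {f : ℂ → ℂ} (hc : ContinuousOn f (closedBall 0 1))
    (hd : DifferentiableOn ℂ f (ball 0 1)) {z : ℂ} (hz : z ∈ ball (0:ℂ) 1) :
    ‖f z‖ ^ p ≤ (1/(2*Real.pi)) *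
      ∫ t in (0:ℝ)..(2*Real.pi), Pker z t * ‖f (Complex.exp (t * Complex.I))‖ ^ p := by
  have hz' : ‖z‖ < 1 := by simpa [mem_ball, Complex.dist_eq] using hz
  have hp0 : (0:ℝ) < p := lt_trans one_pos hp
  have htwo : (0:ℝ) < 2*Real.pi := Real.two_pi_pos
  set g : ℝ → ℝ := fun t => ‖f (Complex.exp (t * Complex.I))‖ with hgdef
  have hgc : Continuous g := (circle_cont hc).norm
  have hgnn : ∀ t, 0 ≤ g t := fun t => norm_nonneg _
  have hPc := Pker_cont hz'
  -- Step 1 : Poisson estimate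
  have h1 : 2*Real.pi * ‖f z‖ ≤ ∫ t in (0:ℝ)..(2*Real.pi), Pker z t * g t := by
    have h := poisson_rep hc hd hz
    have hn : ‖∫ t in (0:ℝ)..(2*Real.pi), ((Pker z t : ℝ):ℂ) * f (Complex.exp (t * Complex.I))‖
        = 2*Real.pi * ‖f z‖ := by
      rw [h, norm_mul]
      have h2pi : (2*(Real.pi:ℂ)) = ((2*Real.pi:ℝ):ℂ) := by push_cast; ring
      rw [h2pi, Complex.norm_real, Real.norm_eq_abs, _root_.abs_of_nonneg htwo.le]
    calc 2*Real.pi * ‖f z‖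
        = ‖∫ t in (0:ℝ)..(2*Real.pi), ((Pker z t : ℝ):ℂ) * f (Complex.exp (t * Complex.I))‖ :=
          hn.symm
      _ ≤ ∫ t in (0:ℝ)..(2*Real.pi), ‖((Pker z t : ℝ):ℂ) * f (Complex.exp (t * Complex.I))‖ :=
          intervalIntegral.norm_integral_le_integral_norm htwo.le
      _ = ∫ t in (0:ℝ)..(2*Real.pi), Pker z t * g t := by
          apply intervalIntegral.integral_congr
          intro t _
          simp only [norm_mul, Complex.norm_real, Real.norm_eq_abs]
          rw [_root_.abs_of_nonneg (Pker_nonneg hz'.le t)]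
  -- Step 2 : Hölder
  set q : ℝ := Real.conjExponent p with hqdef
  have hpq : p.HolderConjugate q := Real.HolderConjugate.conjExponent hp
  set ν := volume.restrict (Ioc (0:ℝ) (2*Real.pi)) with hνdef
  set u : ℝ → ℝ≥0∞ := fun t => ENNReal.ofReal (Pker z t) with hudef
  set v : ℝ → ℝ≥0∞ := fun t => ENNReal.ofReal (g t) with hvdef
  have hum : Measurable u := ENNReal.measurable_ofReal.comp hPc.measurable
  have hvm : Measurable v := ENNReal.measurable_ofReal.comp hgc.measurable
  have hu0 : ∀ t, u t ≠ 0 := fun t => (ENNReal.ofReal_pos.2 (Pker_pos hz' t)).ne'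
  have hutop : ∀ t, u t ≠ ⊤ := fun t => ENNReal.ofReal_ne_top
  have hold := ENNReal.lintegral_mul_le_Lp_mul_Lq ν hpq
    (f := fun t => (u t)^(1/p) * v t) (g := fun t => (u t)^(1/q))
    ((((ENNReal.continuous_rpow_const.measurable.comp hum)).mul hvm).aemeasurable)
    ((ENNReal.continuous_rpow_const.measurable.comp hum).aemeasurable)
  have hprod : ∀ t, ((u t)^(1/p) * v t) * (u t)^(1/q) = u t * v t := by
    intro t
    rw [mul_right_comm, ← ENNReal.rpow_add _ _ (hu0 t) (hutop t), one_div, one_div,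
      hpq.inv_add_inv_eq_one, ENNReal.rpow_one]
  have hLp : ∀ t, ((u t)^(1/p) * v t)^p = u t * (v t)^p := by
    intro t
    rw [ENNReal.mul_rpow_of_nonneg _ _ hp0.le, ← ENNReal.rpow_mul, one_div,
      inv_mul_cancel₀ hp0.ne', ENNReal.rpow_one]
  have hLq : ∀ t, ((u t)^(1/q))^q = u t := by
    intro t
    rw [← ENNReal.rpow_mul, one_div, inv_mul_cancel₀ hpq.symm.ne_zero, ENNReal.rpow_one]
  have hold2 : ∫⁻ t, u t * v t ∂ν ≤
      (∫⁻ t, u t * (v t)^p ∂ν)^(1/p) * (∫⁻ t, u t ∂ν)^(1/q) := by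
    calc ∫⁻ t, u t * v t ∂ν
        = ∫⁻ t, ((u t)^(1/p) * v t) * (u t)^(1/q) ∂ν := lintegral_congr fun t => (hprod t).symm
      _ ≤ (∫⁻ t, (((u t)^(1/p) * v t))^p ∂ν)^(1/p) * (∫⁻ t, ((u t)^(1/q))^q ∂ν)^(1/q) := hold
      _ = _ := by rw [lintegral_congr hLp, lintegral_congr hLq]
  -- conversions to real integrals
  have hint1 : IntegrableOn (fun t => Pker z t * g t) (Ioc (0:ℝ) (2*Real.pi)) volume :=
    (intervalIntegrable_iff_integrableOn_Ioc_of_le htwo.le).1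
      ((hPc.mul hgc).intervalIntegrable _ _)
  have hgp : Continuous (fun t => g t ^ p) := hgc.rpow_const (fun t => Or.inr hp0.le)
  have hint2 : IntegrableOn (fun t => Pker z t * g t ^ p) (Ioc (0:ℝ) (2*Real.pi)) volume :=
    (intervalIntegrable_iff_integrableOn_Ioc_of_le htwo.le).1
      ((hPc.mul hgp).intervalIntegrable _ _)
  have hint3 : IntegrableOn (Pker z) (Ioc (0:ℝ) (2*Real.pi)) volume :=
    (intervalIntegrable_iff_integrableOn_Ioc_of_le htwo.le).1 (hPc.intervalIntegrable _ _)
  set A : ℝ := ∫ t in (0:ℝ)..(2*Real.pi), Pker z t * g t with hAdef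
  set B : ℝ := ∫ t in (0:ℝ)..(2*Real.pi), Pker z t * g t ^ p with hBdef
  have hBnn : 0 ≤ B := by
    rw [hBdef, intervalIntegral.integral_of_le htwo.le]
    exact integral_nonneg fun t => mul_nonneg (Pker_nonneg hz'.le t) (Real.rpow_nonneg (hgnn t) p)
  have e1 : ENNReal.ofReal A = ∫⁻ t, u t * v t ∂ν := by
    rw [hAdef, intervalIntegral.integral_of_le htwo.le,
      MeasureTheory.ofReal_integral_eq_lintegral_ofReal hint1
        (Filter.Eventually.of_forall fun t => mul_nonneg (Pker_nonneg hz'.le t) (hgnn t))]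
    exact lintegral_congr fun t => ENNReal.ofReal_mul (Pker_nonneg hz'.le t)
  have e2 : ENNReal.ofReal B = ∫⁻ t, u t * (v t)^p ∂ν := by
    rw [hBdef, intervalIntegral.integral_of_le htwo.le,
      MeasureTheory.ofReal_integral_eq_lintegral_ofReal hint2
        (Filter.Eventually.of_forall fun t =>
          mul_nonneg (Pker_nonneg hz'.le t) (Real.rpow_nonneg (hgnn t) p))]
    refine lintegral_congr fun t => ?_
    rw [ENNReal.ofReal_mul (Pker_nonneg hz'.le t), ENNReal.ofReal_rpow_of_nonneg (hgnn t) hp0.le]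
  have e3 : ∫⁻ t, u t ∂ν = ENNReal.ofReal (2*Real.pi) := by
    rw [← MeasureTheory.ofReal_integral_eq_lintegral_ofReal hint3
      (Filter.Eventually.of_forall fun t => Pker_nonneg hz'.le t)]
    congr 1
    rw [← intervalIntegral.integral_of_le htwo.le]
    exact Pker_integral hz
  have hAB : A ≤ B^(1/p) * (2*Real.pi)^(1/q) := by
    have h' : ENNReal.ofReal A ≤ ENNReal.ofReal (B^(1/p) * (2*Real.pi)^(1/q)) := by
      rw [ENNReal.ofReal_mul (Real.rpow_nonneg hBnn _),
        ← ENNReal.ofReal_rpow_of_nonneg hBnn hpq.one_div_nonneg,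
        ← ENNReal.ofReal_rpow_of_nonneg htwo.le hpq.symm.one_div_nonneg, e1, e2, ← e3]
      exact hold2
    exact (ENNReal.ofReal_le_ofReal_iff
      (mul_nonneg (Real.rpow_nonneg hBnn _) (Real.rpow_nonneg htwo.le _))).1 h'
  -- Step 3 : combine
  have h2 : 2*Real.pi * ‖f z‖ ≤ B^(1/p) * (2*Real.pi)^(1/q) := le_trans h1 hAB
  have h3 : (2*Real.pi * ‖f z‖)^p ≤ (B^(1/p) * (2*Real.pi)^(1/q))^p :=
    Real.rpow_le_rpow (by positivity) h2 hp0.le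
  rw [Real.mul_rpow htwo.le (norm_nonneg _),
    Real.mul_rpow (Real.rpow_nonneg hBnn _) (Real.rpow_nonneg htwo.le _),
    ← Real.rpow_mul hBnn, one_div, inv_mul_cancel₀ hp0.ne', Real.rpow_one,
    ← Real.rpow_mul htwo.le] at h3
  have hq1 : 1/q * p = p - 1 := by
    rw [one_div, mul_comm, ← div_eq_mul_inv]
    exact hpq.div_conj_eq_sub_one
  rw [hq1] at h3
  have hsplit : (2*Real.pi)^p = (2*Real.pi)^(p-1) * (2*Real.pi) := by
    rw [show p = (p-1)+1 by ring, Real.rpow_add htwo, Real.rpow_one]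
    ring_nf
  rw [hsplit] at h3
  have hpos : (0:ℝ) < (2*Real.pi)^(p-1) := Real.rpow_pos_of_pos htwo _
  have h4 : 2*Real.pi * ‖f z‖^p ≤ B := by
    have : (2*Real.pi)^(p-1) * (2*Real.pi * ‖f z‖^p) ≤ (2*Real.pi)^(p-1) * B := by
      calc (2*Real.pi)^(p-1) * (2*Real.pi * ‖f z‖^p)
          = (2*Real.pi)^(p-1) * (2*Real.pi) * ‖f z‖^p := by ring
        _ ≤ B * (2*Real.pi)^(p-1) := h3
        _ = (2*Real.pi)^(p-1) * B := by ring
    exact le_of_mul_le_mul_left this hpos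
  rw [one_div_mul_eq_div, le_div_iff₀' htwo]
  exact h4

lemma abs_shift (r θ t : ℝ) :
    ‖Complex.exp (((t - θ : ℝ) : ℂ) * Complex.I) - (r:ℂ)‖
      = ‖Complex.exp ((t:ℝ) * Complex.I) - (r:ℂ) * Complex.exp ((θ:ℝ) * Complex.I)‖ := by
  have key : Complex.exp (((t - θ : ℝ) : ℂ) * Complex.I) - (r:ℂ)
      = Complex.exp ((-θ : ℝ) * Complex.I) *
        (Complex.exp ((t:ℝ) * Complex.I) - (r:ℂ) * Complex.exp ((θ:ℝ) * Complex.I)) := by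
    have e1 : Complex.exp (((-θ:ℝ):ℂ) * Complex.I) * Complex.exp (((t:ℝ):ℂ) * Complex.I)
        = Complex.exp (((t - θ:ℝ):ℂ) * Complex.I) := by
      rw [← Complex.exp_add]; congr 1; push_cast; ring
    have e2 : Complex.exp (((-θ:ℝ):ℂ) * Complex.I) * ((r:ℂ) * Complex.exp (((θ:ℝ):ℂ) * Complex.I))
        = (r:ℂ) := by
      rw [mul_comm ((r:ℂ)) _, ← mul_assoc, ← Complex.exp_add,
        show ((-θ:ℝ):ℂ) * Complex.I + ((θ:ℝ):ℂ) * Complex.I = 0 by push_cast; ring,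
        Complex.exp_zero, one_mul]
    rw [mul_sub, e1, e2]
  rw [key, norm_mul, Complex.norm_exp_ofReal_mul_I, one_mul]

lemma Pker_shift {r : ℝ} (θ t : ℝ) :
    Pker ((r:ℂ) * Complex.exp ((θ:ℝ) * Complex.I)) t = Pker ((r:ℂ)) (t - θ) := by
  rw [Pker, Pker, norm_mul, Complex.norm_exp_ofReal_mul_I, mul_one, abs_shift]

lemma Pker_periodic {r : ℝ} : Function.Periodic (Pker ((r:ℂ))) (2*Real.pi) := by
  intro s
  rw [Pker, Pker]
  congr 3
  rw [Complex.ofReal_add, add_mul, Complex.exp_add]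
  have : Complex.exp (((2*Real.pi : ℝ):ℂ) * Complex.I) = 1 := by
    push_cast
    exact Complex.exp_two_pi_mul_I
  rw [this, mul_one]

lemma circle_cont_r {f : ℂ → ℂ} (hc : ContinuousOn f (closedBall 0 1)) {r : ℝ}
    (hr0 : 0 ≤ r) (hr1 : r ≤ 1) :
    Continuous (fun θ : ℝ => f ((r:ℂ) * Complex.exp (θ * Complex.I))) := by
  apply hc.comp_continuous (by fun_prop)
  intro θ
  simp only [mem_closedBall, Complex.dist_eq, sub_zero, norm_mul, Complex.norm_exp_ofReal_mul_I,
    Complex.norm_real, Real.norm_eq_abs, mul_one]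
  rw [_root_.abs_of_nonneg hr0]
  exact hr1

lemma mean_le_boundary {p : ℝ} (hp : 1 < p) {f : ℂ → ℂ}
    (hc : ContinuousOn f (closedBall 0 1)) (hd : DifferentiableOn ℂ f (ball 0 1))
    {r : ℝ} (hr0 : 0 < r) (hr1 : r < 1) :
    (1/(2*Real.pi)) * ∫ θ in (0:ℝ)..(2*Real.pi), ‖f ((r:ℂ) * Complex.exp (θ * Complex.I))‖ ^ p
      ≤ (1/(2*Real.pi)) * ∫ t in (0:ℝ)..(2*Real.pi), ‖f (Complex.exp (t * Complex.I))‖ ^ p := by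
  have htwo : (0:ℝ) < 2*Real.pi := Real.two_pi_pos
  have hp0 : (0:ℝ) < p := lt_trans one_pos hp
  set G : ℝ → ℝ := fun t => ‖f (Complex.exp (t * Complex.I))‖ ^ p with hGdef
  have hGc : Continuous G := (circle_cont hc).norm.rpow_const (fun t => Or.inr hp0.le)
  have hGnn : ∀ t, 0 ≤ G t := fun t => Real.rpow_nonneg (norm_nonneg _) p
  have hzmem : ∀ θ : ℝ, (r:ℂ) * Complex.exp ((θ:ℝ) * Complex.I) ∈ ball (0:ℂ) 1 := by
    intro θ
    simp [mem_ball, Complex.dist_eq, norm_mul, Complex.norm_exp_ofReal_mul_I,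
      Complex.norm_real, Real.norm_eq_abs, abs_of_pos hr0, hr1]
  have hrball : ((r:ℂ)) ∈ ball (0:ℂ) 1 := by
    simp [mem_ball, Complex.dist_eq, Complex.norm_real, Real.norm_eq_abs, abs_of_pos hr0, hr1]
  set ν := volume.restrict (Ioc (0:ℝ) (2*Real.pi)) with hνdef
  set Q : ℝ × ℝ → ℝ := fun s => Pker ((r:ℂ) * Complex.exp ((s.1:ℝ) * Complex.I)) s.2 * G s.2
    with hQdef
  -- continuity of the kernel in both variables
  have hQc : Continuous Q := by
    apply Continuous.mul ?_ (hGc.comp continuous_snd)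
    have hden : ∀ s : ℝ × ℝ,
        Complex.exp ((s.2:ℝ) * Complex.I) - (r:ℂ) * Complex.exp ((s.1:ℝ) * Complex.I) ≠ 0 := by
      intro s h
      have := congrArg norm (sub_eq_zero.1 h)
      rw [Complex.norm_exp_ofReal_mul_I, norm_mul, Complex.norm_exp_ofReal_mul_I,
        Complex.norm_real, Real.norm_eq_abs, abs_of_pos hr0, mul_one] at this
      exact absurd this.symm (ne_of_lt hr1)
    unfold Pker
    apply Continuous.div
    · apply Continuous.sub continuous_const
      apply Continuous.pow
      exact continuous_norm.comp (by fun_prop)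
    · apply Continuous.pow
      exact continuous_norm.comp (by fun_prop)
    · intro s
      exact pow_ne_zero 2 (norm_ne_zero_iff.mpr (hden s))
  have hνprod : ν.prod ν = (volume : Measure (ℝ × ℝ)).restrict
      (Ioc (0:ℝ) (2*Real.pi) ×ˢ Ioc (0:ℝ) (2*Real.pi)) := by
    rw [hνdef, Measure.prod_restrict, ← Measure.volume_eq_prod]
  have hQint : Integrable Q (ν.prod ν) := by
    rw [hνprod]
    apply (hQc.continuousOn.integrableOn_compact (isCompact_Icc.prod isCompact_Icc)).mono_set
    exact Set.prod_mono Ioc_subset_Icc_self Ioc_subset_Icc_self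
  -- inner kernel integral over θ
  have hinner : ∀ t : ℝ, (∫ θ, Pker ((r:ℂ) * Complex.exp ((θ:ℝ) * Complex.I)) t ∂ν)
      = 2*Real.pi := by
    intro t
    rw [hνdef, ← intervalIntegral.integral_of_le htwo.le]
    have : ∀ θ ∈ uIcc (0:ℝ) (2*Real.pi),
        Pker ((r:ℂ) * Complex.exp ((θ:ℝ) * Complex.I)) t = Pker ((r:ℂ)) (t - θ) :=
      fun θ _ => Pker_shift θ t
    rw [intervalIntegral.integral_congr this, intervalIntegral.integral_comp_sub_left
      (fun s => Pker ((r:ℂ)) s) t]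
    have hper := Pker_periodic (r := r)
    have := hper.intervalIntegral_add_eq (t - (2*Real.pi)) 0
    rw [sub_add_cancel, zero_add] at this
    rw [sub_zero, this]
    exact Pker_integral hrball
  -- main chain
  have hLint : Integrable (fun θ : ℝ => ‖f ((r:ℂ) * Complex.exp ((θ:ℝ) * Complex.I))‖ ^ p) ν := by
    rw [hνdef]
    exact (((circle_cont_r hc hr0.le hr1.le).norm.rpow_const
      (fun t => Or.inr hp0.le)).continuousOn.integrableOn_compact isCompact_Icc).mono_set
      Ioc_subset_Icc_self
  have hRint : Integrable (fun θ : ℝ => (1/(2*Real.pi)) * ∫ t, Q (θ, t) ∂ν) ν :=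
    (hQint.integral_prod_left).const_mul _
  have main : (∫ θ, ‖f ((r:ℂ) * Complex.exp ((θ:ℝ) * Complex.I))‖ ^ p ∂ν) ≤ ∫ t, G t ∂ν := by
    have step1 : (∫ θ, ‖f ((r:ℂ) * Complex.exp ((θ:ℝ) * Complex.I))‖ ^ p ∂ν)
        ≤ ∫ θ, (1/(2*Real.pi)) * ∫ t, Q (θ, t) ∂ν ∂ν := by
      apply MeasureTheory.integral_mono hLint hRint
      intro θ
      have hj := pointwise_jensen hp hc hd (hzmem θ)
      have : (∫ t in (0:ℝ)..(2*Real.pi),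
          Pker ((r:ℂ) * Complex.exp ((θ:ℝ) * Complex.I)) t * ‖f (Complex.exp (t * Complex.I))‖ ^ p)
          = ∫ t, Q (θ, t) ∂ν := by
        rw [intervalIntegral.integral_of_le htwo.le, hνdef]
      rw [this] at hj
      exact hj
    have step2 : (∫ θ, (1/(2*Real.pi)) * ∫ t, Q (θ, t) ∂ν ∂ν)
        = (1/(2*Real.pi)) * ∫ θ, (∫ t, Q (θ, t) ∂ν) ∂ν := integral_const_mul _ _
    have step3 : (∫ θ, (∫ t, Q (θ, t) ∂ν) ∂ν) = ∫ t, (∫ θ, Q (θ, t) ∂ν) ∂ν :=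
      MeasureTheory.integral_integral_swap (f := fun θ t => Q (θ, t)) hQint
    have step4 : (∫ t, (∫ θ, Q (θ, t) ∂ν) ∂ν) = ∫ t, (2*Real.pi) * G t ∂ν := by
      apply MeasureTheory.integral_congr_ae
      apply Filter.Eventually.of_forall
      intro t
      rw [hQdef]
      simp only
      rw [MeasureTheory.integral_mul_const, hinner t]
    have step5 : (∫ t, (2*Real.pi) * G t ∂ν) = (2*Real.pi) * ∫ t, G t ∂ν := integral_const_mul _ _
    calc (∫ θ, ‖f ((r:ℂ) * Complex.exp ((θ:ℝ) * Complex.I))‖ ^ p ∂ν)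
        ≤ ∫ θ, (1/(2*Real.pi)) * ∫ t, Q (θ, t) ∂ν ∂ν := step1
      _ = (1/(2*Real.pi)) * ((2*Real.pi) * ∫ t, G t ∂ν) := by rw [step2, step3, step4, step5]
      _ = ∫ t, G t ∂ν := by field_simp
  rw [intervalIntegral.integral_of_le htwo.le, intervalIntegral.integral_of_le htwo.le]
  exact mul_le_mul_of_nonneg_left main (by positivity)

/-- If `μ` is a reverse Carleson measure for `H^p`, then so is its restriction to
the unit circle: the part of `μ` in the open disk can be dropped. -/
theorem boundary_part_suffices (p : ℝ) (hp : 1 < p)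
    (μ : Measure ℂ) [IsFiniteMeasure μ] (hsupp : μ (closedBall (0:ℂ) 1)ᶜ = 0)
    (hrev : ∃ C > (0:ℝ), ∀ f : ℂ → ℂ, ContinuousOn f (closedBall (0:ℂ) 1) →
      DifferentiableOn ℂ f (ball (0:ℂ) 1) →
      ENNReal.ofReal (C * hNormPow p f) ≤ ∫⁻ z, ENNReal.ofReal (‖f z‖ ^ p) ∂μ) :
    ∃ C' > (0:ℝ), ∀ f : ℂ → ℂ, ContinuousOn f (closedBall (0:ℂ) 1) →
      DifferentiableOn ℂ f (ball (0:ℂ) 1) →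
      ENNReal.ofReal (C' * hNormPow p f) ≤
        ∫⁻ z, ENNReal.ofReal (‖f z‖ ^ p) ∂(μ.restrict (sphere (0:ℂ) 1)) := by
  obtain ⟨C, hC, hrevC⟩ := hrev
  refine ⟨C, hC, ?_⟩
  intro f hfc hfd
  have htwo : (0:ℝ) < 2*Real.pi := Real.two_pi_pos
  have hp0 : (0:ℝ) < p := lt_trans one_pos hp
  set I1 : ℝ := (1/(2*Real.pi)) * ∫ t in (0:ℝ)..(2*Real.pi), ‖f (Complex.exp (t * Complex.I))‖ ^ p
    with hI1def
  -- uniform bound on ‖f‖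
  obtain ⟨B₀, hB₀⟩ := (isCompact_closedBall (0:ℂ) 1).exists_bound_of_continuousOn hfc
  set B := max B₀ 0 with hBdef
  have hBnn : (0:ℝ) ≤ B := le_max_right _ _
  have hfB : ∀ z ∈ closedBall (0:ℂ) 1, ‖f z‖ ≤ B := fun z hz => (hB₀ z hz).trans (le_max_left _ _)
  -- the dilation-type test functions
  set F : ℕ → ℂ → ℂ := fun n z => z^n * f z with hFdef
  have hFc : ∀ n, ContinuousOn (F n) (closedBall (0:ℂ) 1) :=
    fun n => (continuous_pow n).continuousOn.mul hfc
  have hFd : ∀ n, DifferentiableOn ℂ (F n) (ball (0:ℂ) 1) :=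
    fun n => (differentiable_pow n).differentiableOn.mul hfd
  have hFB : ∀ n, ∀ z ∈ closedBall (0:ℂ) 1, ‖F n z‖ ≤ B := by
    intro n z hz
    have hz1 : ‖z‖ ≤ 1 := by simpa [mem_closedBall, Complex.dist_eq] using hz
    rw [hFdef]
    simp only [norm_mul, norm_pow]
    calc ‖z‖^n * ‖f z‖ ≤ 1 * B :=
      mul_le_mul (pow_le_one₀ (norm_nonneg z) hz1) (hfB z hz) (norm_nonneg _) one_pos.le
    _ = B := one_mul B
  -- hIntegral of the test functions
  have hIF : ∀ n : ℕ, ∀ r ∈ Ioo (0:ℝ) 1, hIntegral p (F n) r = ((r^n)^p) * hIntegral p f r := by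
    intro n r hr
    rw [hIntegral, hIntegral]
    have hpt : ∀ θ ∈ uIcc (0:ℝ) (2*Real.pi),
        ‖F n ((r:ℂ) * Complex.exp (θ * Complex.I))‖ ^ p
          = (r^n)^p * ‖f ((r:ℂ) * Complex.exp (θ * Complex.I))‖ ^ p := by
      intro θ _
      have hnorm : ‖(r:ℂ) * Complex.exp (θ * Complex.I)‖ = r := by
        rw [norm_mul, Complex.norm_real, Real.norm_eq_abs,
          Complex.norm_exp_ofReal_mul_I, _root_.abs_of_pos hr.1, mul_one]
      simp only [hFdef, norm_mul, norm_pow, hnorm]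
      exact Real.mul_rpow (pow_nonneg hr.1.le n) (norm_nonneg _)
    rw [intervalIntegral.integral_congr hpt, intervalIntegral.integral_const_mul]
    ring
  -- boundedness of the means
  have hIbound : ∀ g : ℂ → ℂ, ContinuousOn g (closedBall (0:ℂ) 1) →
      (∀ z ∈ closedBall (0:ℂ) 1, ‖g z‖ ≤ B) →
      ∀ r ∈ Ioo (0:ℝ) 1, hIntegral p g r ≤ B ^ p := by
    intro g hgc hgB r hr
    rw [hIntegral]
    have hmono : (∫ θ in (0:ℝ)..(2*Real.pi), ‖g ((r:ℂ) * Complex.exp (θ * Complex.I))‖ ^ p)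
        ≤ ∫ _ in (0:ℝ)..(2*Real.pi), B ^ p := by
      apply intervalIntegral.integral_mono_on htwo.le
      · exact ((circle_cont_r hgc hr.1.le hr.2.le).norm.rpow_const
          (fun t => Or.inr hp0.le)).intervalIntegrable _ _
      · exact intervalIntegrable_const
      · intro θ _
        apply Real.rpow_le_rpow (norm_nonneg _) ?_ hp0.le
        apply hgB
        simp only [mem_closedBall, Complex.dist_eq, sub_zero, norm_mul, Complex.norm_real, Real.norm_eq_abs,
          Complex.norm_exp_ofReal_mul_I, mul_one]
        rw [_root_.abs_of_pos hr.1]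
        exact hr.2.le
    rw [intervalIntegral.integral_const] at hmono
    calc (1/(2*Real.pi)) * ∫ θ in (0:ℝ)..(2*Real.pi), ‖g ((r:ℂ) * Complex.exp (θ * Complex.I))‖ ^ p
        ≤ (1/(2*Real.pi)) * ((2*Real.pi - 0) • B^p) :=
          mul_le_mul_of_nonneg_left hmono (by positivity)
      _ = B ^ p := by
          rw [smul_eq_mul, sub_zero]
          field_simp
  have hFbdd : ∀ n, BddAbove (hIntegral p (F n) '' Ioo (0:ℝ) 1) := by
    intro n
    refine ⟨B^p, ?_⟩
    rintro x ⟨r, hr, rfl⟩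
    exact hIbound (F n) (hFc n) (hFB n) r hr
  -- the H^p norm is controlled by the boundary integral
  have hMle : hNormPow p f ≤ I1 := by
    apply csSup_le
    · exact ⟨hIntegral p f (1/2), mem_image_of_mem _ (by norm_num)⟩
    · rintro x ⟨r, hr, rfl⟩
      exact mean_le_boundary hp hfc hfd hr.1 hr.2
  -- the radii sequence
  set r : ℕ → ℝ := fun n => Real.exp (-(1/((n:ℝ)+1)^2)) with hrdef
  have hrIoo : ∀ n, r n ∈ Ioo (0:ℝ) 1 := by
    intro n
    constructor
    · exact Real.exp_pos _
    · rw [← Real.exp_zero]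
      apply Real.exp_lt_exp.2
      have : (0:ℝ) < 1/((n:ℝ)+1)^2 := by positivity
      linarith
  -- per-n inequality from the hypothesis
  have key : ∀ n, ENNReal.ofReal (C * (((r n)^n)^p * hIntegral p f (r n)))
      ≤ ∫⁻ z, ENNReal.ofReal (‖F n z‖ ^ p) ∂μ := by
    intro n
    refine le_trans ?_ (hrevC (F n) (hFc n) (hFd n))
    apply ENNReal.ofReal_le_ofReal
    apply mul_le_mul_of_nonneg_left ?_ hC.le
    rw [← hIF n (r n) (hrIoo n)]
    exact le_csSup (hFbdd n) (mem_image_of_mem _ (hrIoo n))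
  -- pass to the restricted measure
  set μ' := μ.restrict (closedBall (0:ℂ) 1) with hμ'def
  have hae : ∀ᵐ z ∂μ, z ∈ closedBall (0:ℂ) 1 := by
    rw [Filter.eventually_iff, MeasureTheory.mem_ae_iff, Set.setOf_mem_eq]
    exact hsupp
  have hμ'eq : μ' = μ := Measure.restrict_eq_self_of_ae_mem hae
  -- limit of the right-hand sides (dominated convergence)
  have hRlim : Tendsto (fun n => ∫⁻ z, ENNReal.ofReal (‖F n z‖ ^ p) ∂μ') atTop
      (𝓝 (∫⁻ z, ENNReal.ofReal (‖f z‖ ^ p) ∂(μ.restrict (sphere (0:ℂ) 1)))) := by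
    have hgoalrw : (∫⁻ z, ENNReal.ofReal (‖f z‖ ^ p) ∂(μ.restrict (sphere (0:ℂ) 1)))
        = ∫⁻ z, Set.indicator (sphere (0:ℂ) 1) (fun z => ENNReal.ofReal (‖f z‖ ^ p)) z ∂μ' := by
      rw [lintegral_indicator (Metric.isClosed_sphere.measurableSet), hμ'def, Measure.restrict_restrict
        Metric.isClosed_sphere.measurableSet, inter_eq_left.2 sphere_subset_closedBall]
    rw [hgoalrw]
    apply tendsto_lintegral_of_dominated_convergence' (fun _ => ENNReal.ofReal (B^p))
    · intro n
      apply AEMeasurable.ennreal_ofReal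
      rw [hμ'def]
      exact (((hFc n).norm.rpow_const (fun z _ => Or.inr hp0.le)).aemeasurable
        measurableSet_closedBall)
    · intro n
      filter_upwards [ae_restrict_mem measurableSet_closedBall] with z hz
      exact ENNReal.ofReal_le_ofReal
        (Real.rpow_le_rpow (norm_nonneg _) (hFB n z hz) hp0.le)
    · rw [lintegral_const]
      exact ENNReal.mul_ne_top ENNReal.ofReal_ne_top (measure_ne_top μ' univ)
    · filter_upwards [ae_restrict_mem measurableSet_closedBall] with z hz
      have hz1 : ‖z‖ ≤ 1 := by simpa [mem_closedBall, Complex.dist_eq] using hz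
      have hnorm : ∀ n : ℕ, ‖F n z‖ ^ p = (‖z‖^n * ‖f z‖) ^ p := by
        intro n
        rw [hFdef]
        simp [norm_mul, norm_pow]
      rcases eq_or_lt_of_le hz1 with heq | hlt
      · have hzs : z ∈ sphere (0:ℂ) 1 := by
          simp [mem_sphere, Complex.dist_eq, heq.symm]
        have : ∀ n : ℕ, ENNReal.ofReal (‖F n z‖ ^ p) = Set.indicator (sphere (0:ℂ) 1)
            (fun z => ENNReal.ofReal (‖f z‖ ^ p)) z := by
          intro n
          rw [Set.indicator_of_mem hzs, hnorm n, heq]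
          simp
        simp only [this]
        exact tendsto_const_nhds
      · have hzs : z ∉ sphere (0:ℂ) 1 := by
          simp only [mem_sphere, Complex.dist_eq, sub_zero]
          exact ne_of_lt hlt
        rw [Set.indicator_of_notMem hzs]
        have h0 : Tendsto (fun n : ℕ => ‖z‖^n * ‖f z‖) atTop (𝓝 0) := by
          have := (tendsto_pow_atTop_nhds_zero_of_lt_one (norm_nonneg z) hlt).mul_const ‖f z‖
          simpa using this
        have hcont : ContinuousAt (fun x : ℝ => ENNReal.ofReal (x ^ p)) 0 :=
          ENNReal.continuous_ofReal.continuousAt.comp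
            (Real.continuousAt_rpow_const 0 p (Or.inr hp0.le))
        have := (hcont.tendsto.comp h0)
        simp only [Function.comp_def] at this
        rw [Real.zero_rpow hp0.ne', ENNReal.ofReal_zero] at this
        simp only [hnorm]
        exact this
  -- limit of the means along the radii sequence
  have hr1 : Tendsto r atTop (𝓝 1) := by
    have h01 : Tendsto (fun n : ℕ => 1/((n:ℝ)+1)^2) atTop (𝓝 0) := by
      apply squeeze_zero (fun n => by positivity) (g := fun n : ℕ => 1/((n:ℝ)+1))
        (fun n => ?_) tendsto_one_div_add_atTop_nhds_zero_nat
      apply one_div_le_one_div_of_le (by positivity)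
      nlinarith [Nat.cast_nonneg (α := ℝ) n]
    have harg : Tendsto (fun n : ℕ => -(1/((n:ℝ)+1)^2)) atTop (𝓝 0) := by
      simpa using h01.neg
    have := (Real.continuous_exp.tendsto 0).comp harg
    simpa [hrdef, Real.exp_zero, Function.comp_def] using this
  have hIlim : Tendsto (fun n => hIntegral p f (r n)) atTop (𝓝 I1) := by
    set ν := volume.restrict (Ioc (0:ℝ) (2*Real.pi)) with hνdef
    have hconv : Tendsto
        (fun n => ∫ θ, ‖f (((r n : ℝ):ℂ) * Complex.exp (θ * Complex.I))‖ ^ p ∂ν) atTop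
        (𝓝 (∫ θ, ‖f (Complex.exp (θ * Complex.I))‖ ^ p ∂ν)) := by
      apply tendsto_integral_of_dominated_convergence (bound := fun _ => B^p)
      · intro n
        exact ((circle_cont_r hfc (hrIoo n).1.le (hrIoo n).2.le).norm.rpow_const
          (fun t => Or.inr hp0.le)).aestronglyMeasurable
      · exact integrable_const _
      · intro n
        apply Filter.Eventually.of_forall
        intro θ
        have hmem : ((r n : ℝ):ℂ) * Complex.exp (θ * Complex.I) ∈ closedBall (0:ℂ) 1 := by
          simp only [mem_closedBall, Complex.dist_eq, sub_zero, norm_mul, Complex.norm_real, Real.norm_eq_abs,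
            Complex.norm_exp_ofReal_mul_I, mul_one]
          rw [_root_.abs_of_pos (hrIoo n).1]
          exact (hrIoo n).2.le
        rw [Real.norm_eq_abs, _root_.abs_of_nonneg (Real.rpow_nonneg (norm_nonneg _) p)]
        exact Real.rpow_le_rpow (norm_nonneg _) (hfB _ hmem) hp0.le
      · apply Filter.Eventually.of_forall
        intro θ
        have hemem : Complex.exp (θ * Complex.I) ∈ closedBall (0:ℂ) 1 := by
          simp [mem_closedBall, Complex.dist_eq, Complex.norm_exp_ofReal_mul_I]
        have hzc : Tendsto (fun n => ((r n : ℝ):ℂ) * Complex.exp (θ * Complex.I)) atTop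
            (𝓝 (Complex.exp (θ * Complex.I))) := by
          have h1 : Tendsto (fun n => ((r n : ℝ):ℂ)) atTop (𝓝 ((1:ℝ):ℂ)) :=
            (Complex.continuous_ofReal.tendsto 1).comp hr1
          have := h1.mul_const (Complex.exp (θ * Complex.I))
          simpa using this
        have hmem : ∀ n : ℕ, ((r n : ℝ):ℂ) * Complex.exp (θ * Complex.I) ∈ closedBall (0:ℂ) 1 := by
          intro n
          simp only [mem_closedBall, Complex.dist_eq, sub_zero, norm_mul, Complex.norm_real, Real.norm_eq_abs,
            Complex.norm_exp_ofReal_mul_I, mul_one]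
          rw [_root_.abs_of_pos (hrIoo n).1]
          exact (hrIoo n).2.le
        have hf_tendsto : Tendsto (fun n => f (((r n : ℝ):ℂ) * Complex.exp (θ * Complex.I)))
            atTop (𝓝 (f (Complex.exp (θ * Complex.I)))) := by
          apply ((hfc _ hemem).tendsto).comp
          exact tendsto_nhdsWithin_of_tendsto_nhds_of_eventually_within _ hzc
            (Filter.Eventually.of_forall hmem)
        have := (Real.continuousAt_rpow_const ‖f (Complex.exp (θ * Complex.I))‖ p
          (Or.inr hp0.le)).tendsto.comp hf_tendsto.norm
        simpa [Function.comp_def] using this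
    have hIeq : ∀ n, hIntegral p f (r n)
        = (1/(2*Real.pi)) * ∫ θ, ‖f (((r n : ℝ):ℂ) * Complex.exp (θ * Complex.I))‖ ^ p ∂ν := by
      intro n
      rw [hIntegral, intervalIntegral.integral_of_le htwo.le, hνdef]
    have hI1eq : I1 = (1/(2*Real.pi)) * ∫ θ, ‖f (Complex.exp (θ * Complex.I))‖ ^ p ∂ν := by
      rw [hI1def, intervalIntegral.integral_of_le htwo.le, hνdef]
    rw [hI1eq]
    simp only [hIeq]
    exact hconv.const_mul _
  -- limit of the coefficients
  have hclim : Tendsto (fun n : ℕ => ((r n)^n : ℝ)^p) atTop (𝓝 1) := by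
    have heq : ∀ n : ℕ, ((r n)^n : ℝ)^p = Real.exp (-(((n:ℝ)/((n:ℝ)+1)^2) * p)) := by
      intro n
      rw [hrdef]
      simp only
      rw [← Real.exp_nat_mul, ← Real.exp_mul]
      congr 1
      ring
    have harg : Tendsto (fun n : ℕ => ((n:ℝ)/((n:ℝ)+1)^2) * p) atTop (𝓝 0) := by
      have hb := tendsto_one_div_add_atTop_nhds_zero_nat.mul_const p
      rw [zero_mul] at hb
      apply squeeze_zero (fun n => by positivity) (fun n => ?_) hb
      apply mul_le_mul_of_nonneg_right ?_ hp0.le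
      rw [div_le_div_iff₀ (by positivity) (by positivity)]
      nlinarith [Nat.cast_nonneg (α := ℝ) n]
    have harg' : Tendsto (fun n : ℕ => -(((n:ℝ)/((n:ℝ)+1)^2) * p)) atTop (𝓝 0) := by
      simpa using harg.neg
    have := (Real.continuous_exp.tendsto 0).comp harg'
    rw [Real.exp_zero] at this
    simp only [heq]
    exact this
  -- pass to the limit
  have hLlim : Tendsto (fun n => ENNReal.ofReal (C * (((r n)^n)^p * hIntegral p f (r n))))
      atTop (𝓝 (ENNReal.ofReal (C * I1))) := by
    apply (ENNReal.continuous_ofReal.tendsto _).comp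
    have := (hclim.mul hIlim).const_mul C
    simpa using this
  have key' : ∀ n, ENNReal.ofReal (C * (((r n)^n)^p * hIntegral p f (r n)))
      ≤ ∫⁻ z, ENNReal.ofReal (‖F n z‖ ^ p) ∂μ' := by
    intro n
    rw [hμ'eq]
    exact key n
  have final : ENNReal.ofReal (C * I1)
      ≤ ∫⁻ z, ENNReal.ofReal (‖f z‖ ^ p) ∂(μ.restrict (sphere (0:ℂ) 1)) :=
    le_of_tendsto_of_tendsto' hLlim hRlim key'
  calc ENNReal.ofReal (C * hNormPow p f)
      ≤ ENNReal.ofReal (C * I1) :=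
        ENNReal.ofReal_le_ofReal (mul_le_mul_of_nonneg_left hMle hC.le)
    _ ≤ _ := final
end

section
/- Let 1<p<∞, let I be an arc of the unit circle, and define φ_h(z) = (1/h)∫_{S_{I,h}} (1−|λ|²)^{p−1}/|1−conj(λ)z|^p dA(λ) for z in the closed unit disk, where dA is planar area measure. If z lies in the closed unit disk but not in the closure of I, then there exist δ>0, h₀>0 and a constant C>0 (depending on z, I and p) such that 0 ≤ φ_h(z) ≤ C·h^{p−1} for all 0<h<h₀; in particular φ_h(z) → 0 as h → 0. -/
open MeasureTheory Complex Set Metric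

noncomputable section
/-- `φ_h(z) = (1/h) ∫_{S_{I,h}} (1-|λ|²)^{p-1} / |1 - conj(λ) z|^p dA(λ)`, where `dA` is
planar area (Lebesgue) measure and `I` is the arc at angle `a` of normalized length `ℓ`. -/
def cPhi (p a ℓ h : ℝ) (z : ℂ) : ℝ :=
  (1 / h) * ∫ l in cWindowH a ℓ h,
    (1 - ‖l‖ ^ 2) ^ (p - 1) / ‖1 - (starRingEnd ℂ) l * z‖ ^ p
end

/-- The integrand of `cPhi` is measurable. -/
lemma phi_integrand_meas (p : ℝ) (hp : 1 < p) (z : ℂ) : Measurable (fun l : ℂ =>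
    (1 - ‖l‖ ^ 2) ^ (p - 1) / ‖1 - (starRingEnd ℂ) l * z‖ ^ p) := by
  have h1 : Continuous (fun l : ℂ => (1 - ‖l‖ ^ 2) ^ (p - 1)) :=
    (Real.continuous_rpow_const (by linarith)).comp
      (continuous_const.sub ((continuous_norm).pow 2))
  have h2 : Continuous (fun l : ℂ => ‖1 - (starRingEnd ℂ) l * z‖ ^ p) :=
    (Real.continuous_rpow_const (by linarith)).comp
      (continuous_norm.comp
        (continuous_const.sub ((Complex.continuous_conj.mul continuous_const))))
  exact h1.measurable.div h2.measurable

/-- The key lower bound on the kernel denominator for points off the arc. -/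
lemma phi_key_lb (a ℓ : ℝ) (z : ℂ) (hz : ‖z‖ ≤ 1) (h : ℝ) (h1 : h < 1)
    (d : ℝ) (hd : d = Metric.infDist z (cArc a ℓ)) (hh : h < d/2)
    (l : ℂ) (hl : l ∈ cWindowH a ℓ h) :
    d/2 ≤ ‖1 - (starRingEnd ℂ) l * z‖ := by
  obtain ⟨hl1, hl2, hl3⟩ := hl
  have hr0 : (0:ℝ) < ‖l‖ := by linarith
  set r : ℝ := ‖l‖ with hrdef
  set ω : ℂ := l / (r:ℂ) with hω
  have hωd : d ≤ dist z ω := by rw [hd]; exact Metric.infDist_le_dist_of_mem hl3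
  have hωabs : ‖ω‖ = 1 := by
    rw [hω, norm_div, Complex.norm_real, Real.norm_eq_abs, abs_of_pos hr0, div_self (ne_of_gt hr0)]
  have hlω : l = (r:ℂ) * ω := by
    rw [hω, mul_div_cancel₀]
    exact_mod_cast (ne_of_gt hr0)
  have hωω : (starRingEnd ℂ) ω * ω = 1 := by
    rw [mul_comm, Complex.mul_conj, ← Complex.sq_norm, hωabs]
    norm_num
  have hfact : 1 - (starRingEnd ℂ) l * z = (starRingEnd ℂ) ω * (ω - (r:ℂ) * z) := by
    have : (starRingEnd ℂ) ω * (ω - (r:ℂ) * z)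
        = (starRingEnd ℂ) ω * ω - (r:ℂ) * ((starRingEnd ℂ) ω * z) := by ring
    rw [this, hωω, hlω, map_mul, Complex.conj_ofReal]
    ring
  rw [hfact, norm_mul, Complex.norm_conj, hωabs, one_mul]
  have key : ‖ω - (r:ℂ) * z‖ ≥ ‖ω - z‖ - ‖(1 - (r:ℂ)) * z‖ := by
    have heq : ω - (r:ℂ) * z = (ω - z) + (1 - (r:ℂ)) * z := by ring
    rw [heq]
    have h2 := norm_sub_le ((ω - z) + (1 - (r:ℂ)) * z) ((1 - (r:ℂ)) * z)
    rw [add_sub_cancel_right] at h2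
    have h3 := norm_add_le (ω - z) ((1 - (r:ℂ)) * z)
    linarith
  have h1r : ‖(1 - (r:ℂ)) * z‖ ≤ h := by
    rw [norm_mul]
    have : ‖1 - (r:ℂ)‖ = 1 - r := by
      rw [show (1 : ℂ) - (r:ℂ) = ((1 - r : ℝ) : ℂ) by push_cast; ring, Complex.norm_real, Real.norm_eq_abs,
        _root_.abs_of_nonneg (by linarith : (0:ℝ) ≤ 1 - r)]
    rw [this]
    calc (1 - r) * ‖z‖ ≤ (1 - r) * 1 := by
          apply mul_le_mul_of_nonneg_left hz (by linarith)
      _ ≤ h := by linarith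
  have hωz : ‖ω - z‖ = dist z ω := by rw [dist_comm, Complex.dist_eq]
  rw [hωz] at key
  linarith

/-- Measure bound for the annulus. -/
lemma ann_bound (h : ℝ) (h0 : 0 < h) (h1 : h < 1) :
    volume (closedBall (0:ℂ) 1 \ ball 0 (1-h)) ≤ ENNReal.ofReal (2 * Real.pi * h) := by
  have hsub : ball (0:ℂ) (1-h) ⊆ closedBall 0 1 :=
    (ball_subset_closedBall).trans (closedBall_subset_closedBall (by linarith))
  have hfin : volume (ball (0:ℂ) (1-h)) ≠ ⊤ :=
    (measure_ball_lt_top).ne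
  rw [measure_diff hsub measurableSet_ball.nullMeasurableSet hfin,
    Complex.volume_closedBall, Complex.volume_ball]
  have hpi : (NNReal.pi : ENNReal) = ENNReal.ofReal Real.pi := by
    rw [← NNReal.coe_real_pi, ENNReal.ofReal_coe_nnreal]
  rw [hpi, ← ENNReal.ofReal_pow (by norm_num), ← ENNReal.ofReal_pow (by linarith),
    ← ENNReal.ofReal_mul (by positivity), ← ENNReal.ofReal_mul (by positivity)]
  rw [← ENNReal.ofReal_sub _ (by positivity)]
  apply ENNReal.ofReal_le_ofReal
  nlinarith [Real.pi_pos, sq_nonneg h, mul_nonneg Real.pi_pos.le (sq_nonneg h)]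


/-- The arc is a measurable subset of `ℂ`. -/
lemma cArc_measurable (a ℓ : ℝ) (hℓ1 : ℓ ≤ 1) : MeasurableSet (cArc a ℓ) := by
  apply MeasurableSet.image_of_continuousOn_injOn measurableSet_Ico
  · exact (Continuous.continuousOn (by continuity))
  · intro x hx y hy hxy
    rw [Complex.exp_eq_exp_iff_exists_int] at hxy
    obtain ⟨n, hn⟩ := hxy
    have h3 := congrArg Complex.im hn
    simp [Complex.add_im, Complex.mul_im] at h3
    have hxy2 : x = y + n * (2 * Real.pi) := by
      convert h3 using 2
    have hb1 : x - y < 2 * Real.pi := by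
      obtain ⟨hx1, hx2⟩ := hx
      obtain ⟨hy1, hy2⟩ := hy
      have : 2 * Real.pi * ℓ ≤ 2 * Real.pi := by nlinarith [Real.pi_pos]
      linarith
    have hb2 : -(2 * Real.pi) < x - y := by
      obtain ⟨hx1, hx2⟩ := hx
      obtain ⟨hy1, hy2⟩ := hy
      have : 2 * Real.pi * ℓ ≤ 2 * Real.pi := by nlinarith [Real.pi_pos]
      linarith
    have hn0 : n = 0 := by
      have hpi := Real.pi_pos
      have h4 : ((n:ℝ)) * (2 * Real.pi) = x - y := by linarith [hxy2]
      have h5 : (-1 : ℝ) < n := by nlinarith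
      have h6 : (n : ℝ) < 1 := by nlinarith
      have h5' : (-1:ℤ) < n := by exact_mod_cast h5
      have h6' : (n:ℤ) < 1 := by exact_mod_cast h6
      omega
    rw [hn0] at hxy2
    simpa using hxy2

/-- The modified Carleson window is measurable. -/
lemma cWindowH_measurable (a ℓ : ℝ) (hℓ1 : ℓ ≤ 1) (h : ℝ) :
    MeasurableSet (cWindowH a ℓ h) := by
  have h1 : MeasurableSet {z : ℂ | 1 - h ≤ ‖z‖} :=
    measurableSet_le measurable_const continuous_norm.measurable
  have h2 : MeasurableSet {z : ℂ | ‖z‖ ≤ 1} :=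
    measurableSet_le continuous_norm.measurable measurable_const
  have hg : Measurable (fun z : ℂ => z / (‖z‖ : ℂ)) := by
    apply Measurable.div measurable_id
    exact Complex.measurable_ofReal.comp continuous_norm.measurable
  have h3 : MeasurableSet {z : ℂ | z / (‖z‖ : ℂ) ∈ cArc a ℓ} :=
    hg (cArc_measurable a ℓ hℓ1)
  exact (h1.inter (h2.inter h3))

/-- If `z` is in the closed disk but not in the closure of the arc `I`, then
`0 ≤ φ_h(z) ≤ C h^{p-1}` for all small `h`; in particular `φ_h(z) → 0` as `h → 0⁺`. -/
theorem phi_decay_off_arc (p : ℝ) (hp : 1 < p) (a ℓ : ℝ) (hℓ : 0 < ℓ) (hℓ1 : ℓ ≤ 1)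
    (z : ℂ) (hz : z ∈ closedBall (0:ℂ) 1) (hzI : z ∉ closure (cArc a ℓ)) :
    ∃ δ > (0:ℝ), ∃ h₀ > (0:ℝ), ∃ C > (0:ℝ),
      (∀ h : ℝ, 0 < h → h < h₀ →
        0 ≤ cPhi p a ℓ h z ∧ cPhi p a ℓ h z ≤ C * h ^ (p - 1)) ∧
      Filter.Tendsto (fun h : ℝ => cPhi p a ℓ h z) (nhdsWithin 0 (Ioi 0)) (nhds 0) := by
  have hzabs : ‖z‖ ≤ 1 := by
    rw [mem_closedBall, Complex.dist_eq, sub_zero] at hz; exact hz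
  -- the arc is nonempty
  have harc_ne : (cArc a ℓ).Nonempty := by
    refine ⟨Complex.exp (a * Complex.I), a, ⟨le_refl a, ?_⟩, rfl⟩
    have : 0 < 2 * Real.pi * ℓ := by positivity
    linarith
  set d : ℝ := Metric.infDist z (cArc a ℓ) with hd
  have hd0 : 0 < d := by
    rcases lt_or_eq_of_le (Metric.infDist_nonneg : 0 ≤ d) with h | h
    · exact h
    · exact absurd ((Metric.mem_closure_iff_infDist_zero harc_ne).mpr h.symm) hzI
  set h₀ : ℝ := min (d/2) 1 with hh₀
  have hh₀pos : 0 < h₀ := lt_min (by linarith) one_pos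
  set C : ℝ := 2 ^ p * Real.pi / (d/2) ^ p with hC
  have hCpos : 0 < C := by
    apply div_pos
    · exact mul_pos (Real.rpow_pos_of_pos two_pos p) Real.pi_pos
    · exact Real.rpow_pos_of_pos (by linarith) p
  have main : ∀ h : ℝ, 0 < h → h < h₀ →
      0 ≤ cPhi p a ℓ h z ∧ cPhi p a ℓ h z ≤ C * h ^ (p - 1) := by
    intro h hpos hlt
    have hlt2 : h < d/2 := hlt.trans_le (min_le_left _ _)
    have hlt1 : h < 1 := hlt.trans_le (min_le_right _ _)
    constructor
    · apply mul_nonneg (by positivity)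
      apply setIntegral_nonneg (cWindowH_measurable a ℓ hℓ1 h)
      intro l hl
      obtain ⟨hl1, hl2, _⟩ := hl
      have hnum0 : 0 ≤ 1 - ‖l‖ ^ 2 := by nlinarith
      apply div_nonneg <;> positivity
    · -- upper bound
      set f : ℂ → ℝ := fun l =>
        (1 - ‖l‖ ^ 2) ^ (p - 1) / ‖1 - (starRingEnd ℂ) l * z‖ ^ p with hf
      set M : ℝ := (2*h) ^ (p-1) / (d/2) ^ p with hM
      have hfbd : ∀ l ∈ cWindowH a ℓ h, ‖f l‖ ≤ M := by
        intro l hl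
        have hlb := phi_key_lb a ℓ z hzabs h hlt1 d hd hlt2 l hl
        obtain ⟨hl1, hl2, _⟩ := hl
        have hnum0 : 0 ≤ 1 - ‖l‖ ^ 2 := by nlinarith
        have hnum2 : 1 - ‖l‖ ^ 2 ≤ 2*h := by nlinarith
        have hnn : 0 ≤ f l := by
          rw [hf]; apply div_nonneg <;> positivity
        rw [Real.norm_eq_abs, _root_.abs_of_nonneg hnn, hf, hM]
        apply div_le_div₀ (by positivity)
        · exact Real.rpow_le_rpow hnum0 hnum2 (by linarith)
        · exact Real.rpow_pos_of_pos (by linarith) p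
        · exact Real.rpow_le_rpow (by linarith) hlb (by linarith)
      have hsubset : cWindowH a ℓ h ⊆ closedBall (0:ℂ) 1 \ ball 0 (1-h) := by
        intro w hw
        obtain ⟨hw1, hw2, _⟩ := hw
        constructor
        · rw [mem_closedBall, Complex.dist_eq, sub_zero]; exact hw2
        · rw [mem_ball, Complex.dist_eq, sub_zero]; exact not_lt.mpr hw1
      have hμle : volume (cWindowH a ℓ h) ≤ ENNReal.ofReal (2 * Real.pi * h) :=
        (measure_mono hsubset).trans (ann_bound h hpos hlt1)
      have hμfin : volume (cWindowH a ℓ h) < ⊤ :=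
        lt_of_le_of_lt hμle ENNReal.ofReal_lt_top
      have hμreal : (volume (cWindowH a ℓ h)).toReal ≤ 2 * Real.pi * h :=
        ENNReal.toReal_le_of_le_ofReal (by positivity) hμle
      have hint : ‖∫ l in cWindowH a ℓ h, f l‖ ≤ M * (volume (cWindowH a ℓ h)).toReal :=
        norm_setIntegral_le_of_norm_le_const hμfin hfbd
      have hM0 : 0 ≤ M := by
        rw [hM]; positivity
      have hint2 : ∫ l in cWindowH a ℓ h, f l ≤ M * (2 * Real.pi * h) := by
        calc ∫ l in cWindowH a ℓ h, f l ≤ ‖∫ l in cWindowH a ℓ h, f l‖ := le_abs_self _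
          _ ≤ M * (volume (cWindowH a ℓ h)).toReal := hint
          _ ≤ M * (2 * Real.pi * h) := mul_le_mul_of_nonneg_left hμreal hM0
      rw [cPhi]
      calc (1/h) * ∫ l in cWindowH a ℓ h, f l
          ≤ (1/h) * (M * (2 * Real.pi * h)) := by
            apply mul_le_mul_of_nonneg_left hint2 (by positivity)
        _ = C * h ^ (p-1) := by
            have h2p : (2:ℝ) ^ p = 2 ^ (p-1) * 2 := by
              rw [← Real.rpow_add_one (by norm_num : (2:ℝ) ≠ 0) (p-1)]
              norm_num
            have hdp : ((d/2:ℝ)) ^ p ≠ 0 := (Real.rpow_pos_of_pos (by linarith) p).ne'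
            rw [hM, hC, Real.mul_rpow (by norm_num) hpos.le, h2p]
            field_simp
  refine ⟨d/2, by linarith, h₀, hh₀pos, C, hCpos, main, ?_⟩
  have htend : Filter.Tendsto (fun h : ℝ => C * h ^ (p-1)) (nhdsWithin 0 (Ioi 0)) (nhds 0) := by
    have h1 : Filter.Tendsto (fun h : ℝ => h ^ (p-1)) (nhds 0) (nhds 0) := by
      have := (Real.continuousAt_rpow_const 0 (p-1) (Or.inr (by linarith))).tendsto
      rwa [Real.zero_rpow (by linarith : p - 1 ≠ 0)] at this
    have h2 : Filter.Tendsto (fun k : ℝ => C * k ^ (p-1)) (nhdsWithin 0 (Ioi 0))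
        (nhds (C * 0)) := (h1.const_mul C).mono_left nhdsWithin_le_nhds
    simpa using h2
  apply tendsto_of_tendsto_of_tendsto_of_le_of_le' tendsto_const_nhds htend
  · filter_upwards [Ioo_mem_nhdsGT_of_mem (Set.mem_Ico.mpr ⟨le_refl 0, hh₀pos⟩)] with h hh
    exact (main h hh.1 hh.2).1
  · filter_upwards [Ioo_mem_nhdsGT_of_mem (Set.mem_Ico.mpr ⟨le_refl 0, hh₀pos⟩)] with h hh
    exact (main h hh.1 hh.2).2
end

section
/- Let 1<p<∞, let I be an arc of the unit circle, and define φ_h(z) = (1/h)∫_{S_{I,h}} (1−|λ|²)^{p−1}/|1−conj(λ)z|^p dA(λ), where dA is planar area measure. There exists a constant c>0 depending only on p such that for every arc I, every 0<h≤|I|, and every point z in the closure of I (i.e. z = e^{iθ₀} with e^{iθ₀} in the closed arc I), one has φ_h(z) ≥ c. -/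
open MeasureTheory Complex Set Metric

lemma aux_abs_arcsin {v : ℝ} (hv : |v| ≤ 1) :
    |Real.arcsin v| ≤ Real.pi / 2 * |v| := by
  have hπ := Real.pi_pos
  have key : ∀ y : ℝ, 0 ≤ y → y ≤ 1 → Real.arcsin y ≤ Real.pi / 2 * y := by
    intro y h0 h1
    have hs : Real.sin (Real.arcsin y) = y := Real.sin_arcsin (by linarith) h1
    have h2 : 2 / Real.pi * Real.arcsin y ≤ y := by
      nth_rewrite 2 [← hs]
      exact Real.mul_le_sin (Real.arcsin_nonneg.2 h0) (Real.arcsin_le_pi_div_two y)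
    have h3 : 0 ≤ Real.arcsin y := Real.arcsin_nonneg.2 h0
    rw [div_mul_eq_mul_div, div_le_iff₀ hπ] at h2
    nlinarith
  rcases le_or_gt 0 v with h | h
  · rw [_root_.abs_of_nonneg h, _root_.abs_of_nonneg (Real.arcsin_nonneg.2 h)]
    exact key v h (by rwa [_root_.abs_of_nonneg h] at hv)
  · rw [_root_.abs_of_neg h, _root_.abs_of_neg (Real.arcsin_lt_zero.2 h)]
    rw [← Real.arcsin_neg]
    exact key (-v) (by linarith) (by rwa [_root_.abs_of_neg h] at hv)

lemma aux_exp_dist (t : ℝ) :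
    ‖Complex.exp ((t : ℂ) * Complex.I) - 1‖ ≤ 2 * |t| := by
  have habs : ‖(t : ℂ) * Complex.I‖ = |t| := by
    rw [norm_mul, Complex.norm_I, mul_one, Complex.norm_real, Real.norm_eq_abs]
  rcases le_or_gt (|t|) 1 with h | h
  · have := Complex.norm_exp_sub_one_le (x := (t : ℂ) * Complex.I) (by rwa [habs])
    rwa [habs] at this
  · calc ‖Complex.exp ((t : ℂ) * Complex.I) - 1‖
        ≤ ‖Complex.exp ((t : ℂ) * Complex.I)‖ + ‖(1:ℂ)‖ := by
          simpa [sub_eq_add_neg] using norm_add_le (Complex.exp ((t : ℂ) * Complex.I)) (-1)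
    _ = 2 := by rw [Complex.norm_exp_ofReal_mul_I, norm_one]; norm_num
    _ ≤ 2 * |t| := by nlinarith


lemma aux_oneD (c : ℝ) :
    IntegrableOn (fun t : ℝ => |t - c| ^ (-(1/2) : ℝ)) (Icc (c - 2) (c + 2)) := by
  have hr : (-1 : ℝ) < -(1/2) := by norm_num
  have base : IntervalIntegrable (fun x : ℝ => x ^ (-(1/2) : ℝ)) volume 0 2 :=
    intervalIntegral.intervalIntegrable_rpow' hr
  have hright : IntegrableOn (fun t : ℝ => |t - c| ^ (-(1/2) : ℝ)) (Icc c (c + 2)) := by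
    have h2 := base.comp_sub_right c
    rw [zero_add, add_comm 2 c] at h2
    rw [intervalIntegrable_iff_integrableOn_Icc_of_le (by linarith)] at h2
    refine h2.congr_fun ?_ measurableSet_Icc
    intro t ht
    show (t - c) ^ (-(1/2) : ℝ) = |t - c| ^ (-(1/2) : ℝ)
    rw [_root_.abs_of_nonneg (by linarith [ht.1] : (0:ℝ) ≤ t - c)]
  have hleft : IntegrableOn (fun t : ℝ => |t - c| ^ (-(1/2) : ℝ)) (Icc (c - 2) c) := by
    have h2 := (base.comp_sub_left c).symm
    rw [sub_zero] at h2
    rw [intervalIntegrable_iff_integrableOn_Icc_of_le (by linarith)] at h2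
    refine h2.congr_fun ?_ measurableSet_Icc
    intro t ht
    show (c - t) ^ (-(1/2) : ℝ) = |t - c| ^ (-(1/2) : ℝ)
    rw [abs_sub_comm, _root_.abs_of_nonneg (by linarith [ht.2] : (0:ℝ) ≤ c - t)]
  have hsub : Icc (c - 2) (c + 2) ⊆ Icc (c - 2) c ∪ Icc c (c + 2) := by
    intro t ht
    rcases le_total t c with h | h
    · exact Or.inl ⟨ht.1, h⟩
    · exact Or.inr ⟨h, ht.2⟩
  exact (hleft.union hright).mono_set hsub


lemma aux_inv_int (z : ℂ) :
    IntegrableOn (fun l : ℂ => (‖z - l‖)⁻¹) (Metric.closedBall z 2) := by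
  set S : Set (ℝ × ℝ) := (Icc (z.re - 2) (z.re + 2)) ×ˢ (Icc (z.im - 2) (z.im + 2)) with hS
  have hF : IntegrableOn
      (fun q : ℝ × ℝ => |q.1 - z.re| ^ (-(1/2) : ℝ) * |q.2 - z.im| ^ (-(1/2) : ℝ)) S := by
    have h1 := aux_oneD z.re
    have h2 := aux_oneD z.im
    have h3 := Integrable.mul_prod (L := ℝ) h1 h2
    rw [Measure.prod_restrict, ← Measure.volume_eq_prod] at h3
    exact h3
  -- transfer to ℂ
  set e := Complex.measurableEquivRealProd with he
  have hpres : MeasureTheory.MeasurePreserving e := Complex.volume_preserving_equiv_real_prod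
  have hFe : IntegrableOn
      (fun l : ℂ => |l.re - z.re| ^ (-(1/2) : ℝ) * |l.im - z.im| ^ (-(1/2) : ℝ))
      (e ⁻¹' S) := by
    have := (hpres.integrableOn_comp_preimage e.measurableEmbedding
      (f := fun q : ℝ × ℝ => |q.1 - z.re| ^ (-(1/2) : ℝ) * |q.2 - z.im| ^ (-(1/2) : ℝ))
      (s := S)).2 hF
    exact this
  have hsub : Metric.closedBall z 2 ⊆ e ⁻¹' S := by
    intro l hl
    rw [Metric.mem_closedBall, Complex.dist_eq] at hl
    have h1 : |l.re - z.re| ≤ 2 := by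
      have := Complex.abs_re_le_norm (l - z)
      simp only [Complex.sub_re] at this
      linarith [le_trans this hl]
    have h2 : |l.im - z.im| ≤ 2 := by
      have := Complex.abs_im_le_norm (l - z)
      simp only [Complex.sub_im] at this
      linarith [le_trans this hl]
    rw [abs_le] at h1 h2
    have hel : e l = (l.re, l.im) := rfl
    rw [Set.mem_preimage, hel, hS, Set.mem_prod]
    constructor
    · rw [mem_Icc]; constructor <;> simp only [] <;> linarith [h1.1, h1.2]
    · rw [mem_Icc]; constructor <;> simp only [] <;> linarith [h2.1, h2.2]
  have hFdom : IntegrableOn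
      (fun l : ℂ => |l.re - z.re| ^ (-(1/2) : ℝ) * |l.im - z.im| ^ (-(1/2) : ℝ))
      (Metric.closedBall z 2) := hFe.mono_set hsub
  -- null sets
  have hnull : ∀ c : ℝ, volume {l : ℂ | l.re = c} = 0 := by
    intro c
    have hset : ({c} ×ˢ (univ : Set ℝ)) = {p : ℝ × ℝ | p.1 = c} := by
      ext p
      simp only [Set.mem_prod, Set.mem_singleton_iff, Set.mem_univ, and_true, Set.mem_setOf_eq]
    have heq : {l : ℂ | l.re = c} = e ⁻¹' ({c} ×ˢ (univ : Set ℝ)) := by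
      rw [hset]; rfl
    rw [heq, hpres.measure_preimage (((measurableSet_singleton c).prod MeasurableSet.univ).nullMeasurableSet)]
    rw [Measure.volume_eq_prod, Measure.prod_prod]
    simp
  have hnull2 : ∀ c : ℝ, volume {l : ℂ | l.im = c} = 0 := by
    intro c
    have hset : ((univ : Set ℝ) ×ˢ {c}) = {p : ℝ × ℝ | p.2 = c} := by
      ext p
      simp only [Set.mem_prod, Set.mem_singleton_iff, Set.mem_univ, true_and, Set.mem_setOf_eq]
    have heq : {l : ℂ | l.im = c} = e ⁻¹' ((univ : Set ℝ) ×ˢ {c}) := by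
      rw [hset]; rfl
    rw [heq, hpres.measure_preimage ((MeasurableSet.univ.prod (measurableSet_singleton c)).nullMeasurableSet)]
    rw [Measure.volume_eq_prod, Measure.prod_prod]
    simp
  have hae : ∀ᵐ l : ℂ, l.re ≠ z.re ∧ l.im ≠ z.im := by
    have h1 : ∀ᵐ l : ℂ, l.re ≠ z.re := by
      rw [MeasureTheory.ae_iff]
      simpa using hnull z.re
    have h2 : ∀ᵐ l : ℂ, l.im ≠ z.im := by
      rw [MeasureTheory.ae_iff]
      simpa using hnull2 z.im
    exact h1.and h2
  refine Integrable.mono' hFdom ?_ ?_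
  · exact ((continuous_norm.comp (continuous_const.sub continuous_id)).measurable.inv).aestronglyMeasurable
  · refine MeasureTheory.ae_restrict_of_ae ?_
    filter_upwards [hae] with l hl
    obtain ⟨h1, h2⟩ := hl
    set u := |l.re - z.re| with hu
    set v := |l.im - z.im| with hv
    have hu0 : 0 < u := abs_pos.2 (sub_ne_zero.2 h1)
    have hv0 : 0 < v := abs_pos.2 (sub_ne_zero.2 h2)
    have habs2 : u * v ≤ (‖z - l‖) ^ 2 := by
      have : (‖z - l‖) ^ 2 = (z - l).re ^ 2 + (z - l).im ^ 2 := by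
        rw [Complex.sq_norm, Complex.normSq_apply]; ring
      rw [this]
      have hre : (z - l).re ^ 2 = u ^ 2 := by
        rw [Complex.sub_re, hu, ← abs_sub_comm, _root_.sq_abs]
      have him : (z - l).im ^ 2 = v ^ 2 := by
        rw [Complex.sub_im, hv, ← abs_sub_comm, _root_.sq_abs]
      rw [hre, him]
      nlinarith
    have hsqrt : Real.sqrt (u * v) ≤ ‖z - l‖ := by
      have := Real.sqrt_le_sqrt habs2
      rwa [Real.sqrt_sq (norm_nonneg _)] at this
    have hsqrtpos : 0 < Real.sqrt (u * v) := Real.sqrt_pos.2 (by positivity)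
    have hinv : (‖z - l‖)⁻¹ ≤ (Real.sqrt (u * v))⁻¹ :=
      inv_anti₀ hsqrtpos hsqrt
    have heqn : (Real.sqrt (u * v))⁻¹ = u ^ (-(1/2) : ℝ) * v ^ (-(1/2) : ℝ) := by
      rw [Real.sqrt_eq_rpow, Real.mul_rpow hu0.le hv0.le, mul_inv,
        ← Real.rpow_neg hu0.le, ← Real.rpow_neg hv0.le]
    have hnorm : ‖(‖z - l‖)⁻¹‖ = (‖z - l‖)⁻¹ :=
      Real.norm_of_nonneg (by positivity)
    rw [hnorm]
    calc (‖z - l‖)⁻¹ ≤ (Real.sqrt (u * v))⁻¹ := hinv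
    _ = u ^ (-(1/2) : ℝ) * v ^ (-(1/2) : ℝ) := heqn


lemma aux_exp_inj {a b : ℝ} (hb : b - a ≤ 2 * Real.pi) :
    Set.InjOn (fun θ : ℝ => Complex.exp (θ * Complex.I)) (Ico a b) := by
  intro x hx y hy hxy
  simp only [] at hxy
  rw [Complex.exp_eq_exp_iff_exists_int] at hxy
  obtain ⟨n, hn⟩ := hxy
  have hI : ((x : ℂ)) * Complex.I = ((y + n * (2*Real.pi) : ℝ) : ℂ) * Complex.I := by
    push_cast
    rw [hn]; ring
  have him' : x = y + n * (2*Real.pi) := by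
    have := mul_right_cancel₀ Complex.I_ne_zero hI
    exact_mod_cast this
  have hπ := Real.pi_pos
  have hx1 := hx.1; have hx2 := hx.2; have hy1 := hy.1; have hy2 := hy.2
  have habs : |(n:ℝ)| * (2*Real.pi) < 2*Real.pi := by
    have h1 : |x - y| < 2*Real.pi := by
      rw [abs_lt]; constructor <;> nlinarith
    have h2 : |(n:ℝ)| * (2*Real.pi) = |x - y| := by
      rw [show x - y = (n:ℝ) * (2*Real.pi) by linarith, abs_mul,
        _root_.abs_of_nonneg (by positivity : (0:ℝ) ≤ 2*Real.pi)]
    linarith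
  have hlt : |(n:ℝ)| < 1 := by
    by_contra hcon
    push_neg at hcon
    nlinarith
  have hn0 : n = 0 := by
    have : ((|n| : ℤ) : ℝ) < 1 := by rwa [Int.cast_abs]
    have : |n| < 1 := by exact_mod_cast this
    exact Int.abs_lt_one_iff.mp this
  rw [hn0] at him'
  simpa using him'

lemma aux_arc_meas {a ℓ : ℝ} (hℓ : ℓ ≤ 1) : MeasurableSet (cArc a ℓ) := by
  apply MeasurableSet.image_of_continuousOn_injOn measurableSet_Ico
  · exact (Complex.continuous_exp.comp (Complex.continuous_ofReal.mul continuous_const)).continuousOn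
  · apply aux_exp_inj
    have := Real.pi_pos
    nlinarith

lemma aux_window_meas {a ℓ h : ℝ} (hℓ : ℓ ≤ 1) : MeasurableSet (cWindowH a ℓ h) := by
  have h1 : cWindowH a ℓ h = (fun z : ℂ => ‖z‖) ⁻¹' (Icc (1 - h) 1) ∩
      (fun z : ℂ => z / (‖z‖ : ℂ)) ⁻¹' (cArc a ℓ) := by
    ext w
    simp only [cWindowH, Set.mem_setOf_eq, Set.mem_inter_iff, Set.mem_preimage, Set.mem_Icc]
    tauto
  rw [h1]
  have mabs : Measurable fun z : ℂ => ‖z‖ := continuous_norm.measurable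
  exact (mabs measurableSet_Icc).inter
    ((measurable_id.div (Complex.continuous_ofReal.measurable.comp mabs)) (aux_arc_meas hℓ))

lemma aux_closure_arc {a ℓ : ℝ} :
    closure (cArc a ℓ) ⊆ (fun θ : ℝ => Complex.exp (θ * Complex.I)) '' Icc a (a + 2 * Real.pi * ℓ) := by
  apply closure_minimal
  · exact Set.image_mono Ico_subset_Icc_self
  · exact (isCompact_Icc.image
      (Complex.continuous_exp.comp (Complex.continuous_ofReal.mul continuous_const))).isClosed


set_option maxHeartbeats 1000000 in
/-- Uniform lower bound: there is `c > 0` depending only on `p` such that `φ_h(z) ≥ c`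
for every arc `I`, every `0 < h ≤ |I|` and every `z` in the closure of `I`. -/
theorem phi_lower_bound_on_arc (p : ℝ) (hp : 1 < p) :
    ∃ c > (0:ℝ), ∀ a ℓ h : ℝ, 0 < ℓ → ℓ ≤ 1 → 0 < h → h ≤ ℓ →
      ∀ z ∈ closure (cArc a ℓ), c ≤ cPhi p a ℓ h z := by
  have hπ := Real.pi_pos
  refine ⟨Real.pi * (2:ℝ) ^ ((1:ℝ) - p) * (6:ℝ) ^ (-p) / 256, by positivity, ?_⟩
  intro a ℓ h hℓ hℓ1 hh hhℓ z hz
  have hh1 : h ≤ 1 := hhℓ.trans hℓ1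
  obtain ⟨θ₀, hθ₀, rfl⟩ := aux_closure_arc hz
  obtain ⟨hθa, hθL⟩ := hθ₀
  -- choose the center angle t0
  obtain ⟨t0, ht0θ, ht0mem⟩ :
      ∃ t0 : ℝ, |θ₀ - t0| ≤ Real.pi * h / 2 ∧
        ∀ β : ℝ, |β - t0| < Real.pi * h / 2 → a ≤ β ∧ β < a + 2 * Real.pi * ℓ := by
    have hπh : 0 < Real.pi * h := mul_pos hπ hh
    have hπℓh : Real.pi * h ≤ Real.pi * ℓ := by nlinarith
    by_cases hcase : θ₀ + Real.pi * h ≤ a + 2 * Real.pi * ℓ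
    · refine ⟨θ₀ + Real.pi * h / 2, ?_, ?_⟩
      · rw [abs_le]; constructor <;> nlinarith
      · intro β hβ
        rw [abs_lt] at hβ
        constructor <;> nlinarith [hβ.1, hβ.2]
    · push_neg at hcase
      refine ⟨θ₀ - Real.pi * h / 2, ?_, ?_⟩
      · rw [abs_le]; constructor <;> nlinarith
      · intro β hβ
        rw [abs_lt] at hβ
        constructor <;> nlinarith [hβ.1, hβ.2]
  set Z : ℂ := Complex.exp ((θ₀ : ℂ) * Complex.I) with hZ
  set c₀ : ℂ := ((1 - 3*h/4 : ℝ) : ℂ) * Complex.exp ((t0 : ℂ) * Complex.I) with hc₀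
  set B := Metric.closedBall c₀ (h/16) with hB
  set g : ℂ → ℝ := fun l =>
    (1 - ‖l‖ ^ 2) ^ (p - 1) /
      ‖1 - (starRingEnd ℂ) l * Z‖ ^ p with hg
  have habsexp : ∀ t : ℝ, ‖Complex.exp ((t:ℂ) * Complex.I)‖ = 1 :=
    fun t => Complex.norm_exp_ofReal_mul_I t
  have habsz : ‖Z‖ = 1 := habsexp θ₀
  have hkey : ∀ l : ℂ,
      ‖1 - (starRingEnd ℂ) l * Z‖ = ‖Z - l‖ := by
    intro l
    have h1 : (starRingEnd ℂ) Z * Z = 1 := by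
      rw [mul_comm, Complex.mul_conj, Complex.normSq_eq_norm_sq, habsz]
      norm_num
    have h2 : 1 - (starRingEnd ℂ) l * Z = ((starRingEnd ℂ) (Z - l)) * Z := by
      rw [map_sub, sub_mul, h1]
    rw [h2, norm_mul, Complex.norm_conj, habsz, mul_one]
  -- main pointwise facts on the ball B
  have hkeyB : ∀ l ∈ B, l ∈ cWindowH a ℓ h ∧ (h/2) ^ (p-1) / (6*h) ^ p ≤ g l := by
    intro l hl
    rw [hB, Metric.mem_closedBall, Complex.dist_eq] at hl
    set w : ℂ := l * Complex.exp (((-t0 : ℝ) : ℂ) * Complex.I) with hw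
    have hexp1 : Complex.exp ((t0:ℂ) * Complex.I) * Complex.exp (((-t0:ℝ):ℂ) * Complex.I) = 1 := by
      rw [← Complex.exp_add]
      push_cast
      rw [show (t0:ℂ)*Complex.I + (-t0:ℂ)*Complex.I = 0 by ring, Complex.exp_zero]
    have hwc : w - ((1 - 3*h/4 : ℝ) : ℂ) = (l - c₀) * Complex.exp (((-t0:ℝ):ℂ) * Complex.I) := by
      rw [hw, hc₀, sub_mul, mul_assoc, hexp1, mul_one]
    have hwd : ‖w - ((1 - 3*h/4 : ℝ):ℂ)‖ ≤ h/16 := by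
      rw [hwc, norm_mul, habsexp, mul_one]; exact hl
    have hre : |w.re - (1 - 3*h/4)| ≤ h/16 := by
      have h1 := Complex.abs_re_le_norm (w - ((1-3*h/4:ℝ):ℂ))
      simpa [Complex.sub_re, Complex.ofReal_re] using le_trans h1 hwd
    have him : |w.im| ≤ h/16 := by
      have h1 := Complex.abs_im_le_norm (w - ((1-3*h/4:ℝ):ℂ))
      simpa [Complex.sub_im, Complex.ofReal_im] using le_trans h1 hwd
    rw [abs_le] at hre
    have habsw : ‖w‖ = ‖l‖ := by rw [hw, norm_mul, habsexp, mul_one]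
    have hwre_lb : 3/16 ≤ w.re := by nlinarith [hre.1]
    have habsw_lb : 1 - 13*h/16 ≤ ‖w‖ := by
      have h2 : w.re ≤ ‖w‖ := Complex.re_le_norm w
      linarith [hre.1]
    have habsw_ub : ‖w‖ ≤ 1 - 11*h/16 := by
      have h1 : ‖w - 0‖ ≤ ‖w - ((1-3*h/4:ℝ):ℂ)‖ + ‖((1-3*h/4:ℝ):ℂ) - 0‖ :=
        norm_sub_le_norm_sub_add_norm_sub w ((1-3*h/4:ℝ):ℂ) 0
      rw [sub_zero, sub_zero, Complex.norm_real, Real.norm_eq_abs, _root_.abs_of_nonneg (by linarith : (0:ℝ) ≤ 1 - 3*h/4)] at h1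
      linarith
    have habsl_lb : 1 - 13*h/16 ≤ ‖l‖ := habsw ▸ habsw_lb
    have habsl_ub : ‖l‖ ≤ 1 - 11*h/16 := habsw ▸ habsw_ub
    have habsl_pos : 0 < ‖l‖ := by nlinarith
    have habsw_pos : 0 < ‖w‖ := by rw [habsw]; exact habsl_pos
    -- the argument of w
    have hargw : |Complex.arg w| ≤ Real.pi * h / 6 := by
      rw [Complex.arg_of_re_nonneg (by linarith : 0 ≤ w.re)]
      have hquot1 : |w.im / ‖w‖| ≤ 1 := by
        rw [abs_div, _root_.abs_of_nonneg (norm_nonneg w)]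
        exact div_le_one_of_le₀ (Complex.abs_im_le_norm w) (norm_nonneg w)
      have hquot2 : |w.im / ‖w‖| ≤ h/3 := by
        rw [abs_div, _root_.abs_of_nonneg (norm_nonneg w)]
        rw [div_le_iff₀ habsw_pos]
        nlinarith [him, habsw_lb, mul_nonneg hh.le (sub_nonneg.2 hh1)]
      calc |Real.arcsin (w.im / ‖w‖)|
          ≤ Real.pi/2 * |w.im / ‖w‖| := aux_abs_arcsin hquot1
      _ ≤ Real.pi/2 * (h/3) := mul_le_mul_of_nonneg_left hquot2 (by positivity)
      _ = Real.pi * h / 6 := by ring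
    set β := Complex.arg w + t0 with hβ
    have hβt0 : |β - t0| ≤ Real.pi * h / 6 := by
      rw [hβ]; simpa using hargw
    have hβmem : a ≤ β ∧ β < a + 2 * Real.pi * ℓ := by
      apply ht0mem
      have : 0 < Real.pi * h := mul_pos hπ hh
      calc |β - t0| ≤ Real.pi * h / 6 := hβt0
      _ < Real.pi * h / 2 := by linarith
    have hlβ : l = ((‖l‖ : ℝ) : ℂ) * Complex.exp ((β : ℂ) * Complex.I) := by
      have h1 := Complex.norm_mul_exp_arg_mul_I w
      have h2 : l = w * Complex.exp ((t0:ℂ) * Complex.I) := by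
        rw [hw, mul_assoc, mul_comm (Complex.exp _) (Complex.exp _), hexp1, mul_one]
      have h3 : ((‖l‖ : ℝ) : ℂ) * Complex.exp ((β : ℂ) * Complex.I)
          = (((‖w‖ : ℝ) : ℂ) * Complex.exp ((Complex.arg w : ℂ) * Complex.I)) *
            Complex.exp ((t0:ℂ) * Complex.I) := by
        rw [habsw, hβ, mul_assoc, ← Complex.exp_add]
        push_cast
        rw [add_mul]
      rw [h3, h1]
      exact h2
    have habsl_ne : ((‖l‖ : ℝ) : ℂ) ≠ 0 := by
      rw [Complex.ofReal_ne_zero]; exact habsl_pos.ne'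
    have hmem : l ∈ cWindowH a ℓ h := by
      refine ⟨by linarith, by linarith, ?_⟩
      have hdiv : l / ((‖l‖ : ℝ):ℂ) = Complex.exp ((β:ℂ) * Complex.I) := by
        rw [div_eq_iff habsl_ne, mul_comm]
        exact hlβ
      rw [hdiv]
      exact ⟨β, ⟨hβmem.1, hβmem.2⟩, rfl⟩
    -- distance bounds
    have hθβ : |θ₀ - β| ≤ 2 * Real.pi * h / 3 := by
      calc |θ₀ - β| ≤ |θ₀ - t0| + |t0 - β| := abs_sub_le θ₀ t0 β
      _ = |θ₀ - t0| + |β - t0| := by rw [abs_sub_comm t0 β]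
      _ ≤ Real.pi * h / 2 + Real.pi * h / 6 := add_le_add ht0θ hβt0
      _ = 2 * Real.pi * h / 3 := by ring
    have hdub : ‖Z - l‖ ≤ 6*h := by
      have hsplit : Z - l =
          (Z - Complex.exp ((β:ℂ)*Complex.I)) +
          ((1 : ℂ) - ((‖l‖ : ℝ):ℂ)) * Complex.exp ((β:ℂ)*Complex.I) := by
        conv_lhs => rw [hlβ]
        ring
      have hfac : Z - Complex.exp ((β:ℂ)*Complex.I) =
          Complex.exp ((β:ℂ)*Complex.I) * (Complex.exp (((θ₀-β:ℝ):ℂ)*Complex.I) - 1) := by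
        rw [mul_sub, mul_one, ← Complex.exp_add, hZ]
        congr 2
        push_cast
        ring
      have h1 : ‖Z - Complex.exp ((β:ℂ)*Complex.I)‖ ≤ 2 * |θ₀ - β| := by
        rw [hfac, norm_mul, habsexp, one_mul]
        exact aux_exp_dist (θ₀ - β)
      have h2 : ‖((1 : ℂ) - ((‖l‖ : ℝ):ℂ)) * Complex.exp ((β:ℂ)*Complex.I)‖
          = 1 - ‖l‖ := by
        rw [norm_mul, habsexp, mul_one]
        rw [show (1 : ℂ) - ((‖l‖ : ℝ):ℂ) = ((1 - ‖l‖ : ℝ):ℂ) by push_cast; ring]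
        rw [Complex.norm_real, Real.norm_eq_abs, _root_.abs_of_nonneg (by linarith : (0:ℝ) ≤ 1 - ‖l‖)]
      have hpi315 : Real.pi < 3.15 := by
        have := Real.pi_lt_d2
        linarith
      calc ‖Z - l‖
          ≤ ‖Z - Complex.exp ((β:ℂ)*Complex.I)‖ +
            ‖((1 : ℂ) - ((‖l‖ : ℝ):ℂ)) * Complex.exp ((β:ℂ)*Complex.I)‖ := by
            rw [hsplit]; exact norm_add_le _ _
      _ ≤ 2 * (2 * Real.pi * h / 3) + (1 - ‖l‖) := by
            refine add_le_add (by linarith [h1, hθβ]) (by rw [h2])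
      _ ≤ 6 * h := by nlinarith [mul_nonneg hh.le (sub_nonneg.2 hpi315.le)]
    have hdlb : 11*h/16 ≤ ‖Z - l‖ := by
      have h1 : ‖Z - 0‖ ≤ ‖Z - l‖ + ‖l - 0‖ :=
        norm_sub_le_norm_sub_add_norm_sub Z l 0
      rw [sub_zero, sub_zero, habsz] at h1
      linarith
    refine ⟨hmem, ?_⟩
    have hnum : (h/2)^(p-1) ≤ (1 - ‖l‖ ^ 2) ^ (p-1) := by
      apply Real.rpow_le_rpow (by positivity) ?_ (by linarith)
      nlinarith [mul_self_le_mul_self habsl_pos.le habsl_ub, mul_nonneg hh.le (sub_nonneg.2 hh1)]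
    have hden : ‖Z - l‖ ^ p ≤ (6*h) ^ p :=
      Real.rpow_le_rpow (norm_nonneg _) hdub (by linarith)
    have hdpos : 0 < ‖Z - l‖ ^ p :=
      Real.rpow_pos_of_pos (lt_of_lt_of_le (by positivity) hdlb) p
    have hnum_nonneg : 0 ≤ (1 - ‖l‖ ^ 2) ^ (p-1) :=
      Real.rpow_nonneg (by nlinarith [mul_self_le_mul_self habsl_pos.le habsl_ub]) _
    have := div_le_div₀ hnum_nonneg hnum hdpos hden
    rw [hg]
    simp only []
    rw [hkey l]
    exact this
  -- integrability on the window
  have hwinmeas := aux_window_meas (a := a) (h := h) hℓ1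
  have hwinsub : cWindowH a ℓ h ⊆ Metric.closedBall Z 2 := by
    intro l hl
    obtain ⟨h1, h2, _⟩ := hl
    rw [Metric.mem_closedBall, Complex.dist_eq]
    have h3 : ‖l - Z‖ ≤ ‖l‖ + ‖Z‖ :=
      (norm_sub_le_norm_sub_add_norm_sub l 0 Z).trans_eq (by rw [sub_zero, zero_sub, norm_neg])
    rw [habsz] at h3
    linarith
  have hGint : IntegrableOn (fun l : ℂ => (2:ℝ)^(p-1) * (‖Z - l‖)⁻¹) (cWindowH a ℓ h) :=
    (((aux_inv_int Z).mono_set hwinsub).const_mul _)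
  have hgmeas : Measurable g := by
    have m1 : Continuous fun l : ℂ => (1 - ‖l‖ ^ 2) ^ (p - 1) := by
      apply Continuous.rpow_const (continuous_const.sub (continuous_norm.pow 2))
      intro x
      exact Or.inr (by linarith)
    have m2 : Continuous fun l : ℂ => ‖1 - (starRingEnd ℂ) l * Z‖ ^ p := by
      apply Continuous.rpow_const
        (continuous_norm.comp (continuous_const.sub (Complex.continuous_conj.mul continuous_const)))
      intro x
      exact Or.inr (by linarith)
    exact m1.measurable.div m2.measurable
  have hgnn : ∀ l ∈ cWindowH a ℓ h, 0 ≤ g l := by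
    intro l hl
    obtain ⟨_, h2, _⟩ := hl
    apply div_nonneg
    · apply Real.rpow_nonneg
      nlinarith [norm_nonneg l]
    · exact Real.rpow_nonneg (norm_nonneg _) _
  have hgint : IntegrableOn g (cWindowH a ℓ h) := by
    apply Integrable.mono' hGint hgmeas.aestronglyMeasurable
    rw [ae_restrict_iff' hwinmeas]
    apply Filter.Eventually.of_forall
    intro l hl
    obtain ⟨hl1, hl2, _⟩ := hl
    have hdr : 1 - ‖l‖ ≤ ‖Z - l‖ := by
      have h1 : ‖Z - 0‖ ≤ ‖Z - l‖ + ‖l - 0‖ :=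
        norm_sub_le_norm_sub_add_norm_sub Z l 0
      rw [sub_zero, sub_zero, habsz] at h1
      linarith
    have habsl0 : (0:ℝ) ≤ ‖l‖ := norm_nonneg l
    rw [Real.norm_of_nonneg (hgnn l ⟨hl1, hl2, by assumption⟩)]
    rw [hg]
    simp only []
    rw [hkey l]
    rcases (norm_nonneg (Z - l)).eq_or_lt with hd0 | hd0
    · have hr1 : ‖l‖ = 1 := by linarith [hdr, hd0]
      rw [show (1:ℝ) - ‖l‖ ^ 2 = 0 by rw [hr1]; ring]
      rw [Real.zero_rpow (by linarith : p - 1 ≠ 0), zero_div]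
      positivity
    · have h2d : 1 - ‖l‖ ^ 2 ≤ 2 * ‖Z - l‖ := by nlinarith
      have hnum : (1 - ‖l‖ ^ 2)^(p-1) ≤ (2 * ‖Z - l‖)^(p-1) :=
        Real.rpow_le_rpow (by nlinarith) h2d (by linarith)
      have heq : (2 * ‖Z - l‖)^(p-1) / (‖Z - l‖)^p
          = (2:ℝ)^(p-1) * (‖Z - l‖)⁻¹ := by
        rw [Real.mul_rpow (by norm_num) (norm_nonneg _), mul_div_assoc,
          ← Real.rpow_sub hd0, show p - 1 - p = (-1:ℝ) by ring, Real.rpow_neg_one]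
      calc (1 - ‖l‖ ^ 2) ^ (p-1) / ‖Z - l‖ ^ p
          ≤ (2 * ‖Z - l‖)^(p-1) / (‖Z - l‖)^p :=
            div_le_div₀ (Real.rpow_nonneg (by positivity) _) hnum
              (Real.rpow_pos_of_pos hd0 p) le_rfl
      _ = (2:ℝ)^(p-1) * (‖Z - l‖)⁻¹ := heq
  -- putting it together
  have hBsub : B ⊆ cWindowH a ℓ h := fun l hl => (hkeyB l hl).1
  have hBint : IntegrableOn g B := hgint.mono_set hBsub
  have hvol : (volume B).toReal = (h/16)^2 * Real.pi := by
    rw [hB, Complex.volume_closedBall, ENNReal.toReal_mul, ENNReal.toReal_pow,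
      ENNReal.toReal_ofReal (by positivity), ENNReal.coe_toReal, NNReal.coe_real_pi]
  have hIB : (h/2)^(p-1)/(6*h)^p * ((h/16)^2 * Real.pi) ≤ ∫ l in B, g l := by
    have h1 := setIntegral_ge_of_const_le (measurableSet_closedBall (x := c₀) (ε := h/16))
      (measure_closedBall_lt_top).ne (fun l hl => (hkeyB l hl).2) hBint
    rw [hB] at *
    rw [show volume.real (closedBall c₀ (h / 16)) = (volume (closedBall c₀ (h / 16))).toReal from rfl, hvol, smul_eq_mul] at h1
    linarith
  have hmono : ∫ l in B, g l ≤ ∫ l in cWindowH a ℓ h, g l := by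
    apply setIntegral_mono_set hgint ?_ (HasSubset.Subset.eventuallyLE hBsub)
    refine (ae_restrict_iff' hwinmeas).2 (Filter.Eventually.of_forall ?_)
    intro l hl
    exact hgnn l hl
  have harith : Real.pi * (2:ℝ)^((1:ℝ)-p) * (6:ℝ)^(-p) / 256
      = (1/h) * ((h/2)^(p-1)/(6*h)^p * ((h/16)^2 * Real.pi)) := by
    have e1 : ((h:ℝ)/2)^(p-1) = h^(p-1)/(2:ℝ)^(p-1) := Real.div_rpow hh.le (by norm_num) _
    have e2 : ((6:ℝ)*h)^p = (6:ℝ)^p * h^p := Real.mul_rpow (by norm_num) hh.le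
    have e3 : h^(p-1) = h^p / h := by
      rw [Real.rpow_sub hh, Real.rpow_one]
    have e4 : (2:ℝ)^((1:ℝ)-p) = ((2:ℝ)^(p-1))⁻¹ := by
      rw [show (1:ℝ)-p = -(p-1) by ring, Real.rpow_neg (by norm_num)]
    have e5 : (6:ℝ)^(-p) = ((6:ℝ)^p)⁻¹ := Real.rpow_neg (by norm_num) _
    rw [e1, e2, e3, e4, e5]
    have hp2 : (0:ℝ) < (2:ℝ)^(p-1) := Real.rpow_pos_of_pos (by norm_num) _
    have hp6 : (0:ℝ) < (6:ℝ)^p := Real.rpow_pos_of_pos (by norm_num) _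
    have hph : (0:ℝ) < h^p := Real.rpow_pos_of_pos hh _
    field_simp
    ring
  show Real.pi * (2:ℝ) ^ ((1:ℝ) - p) * (6:ℝ) ^ (-p) / 256 ≤ cPhi p a ℓ h Z
  rw [cPhi]
  calc Real.pi * (2:ℝ) ^ ((1:ℝ) - p) * (6:ℝ) ^ (-p) / 256
      = (1/h) * ((h/2)^(p-1)/(6*h)^p * ((h/16)^2 * Real.pi)) := harith
  _ ≤ (1/h) * ∫ l in B, g l := by
      apply mul_le_mul_of_nonneg_left hIB (by positivity)
  _ ≤ (1/h) * ∫ l in cWindowH a ℓ h, g l := by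
      apply mul_le_mul_of_nonneg_left hmono (by positivity)
end
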